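/- arXiv:2301.04431 — 4 statements merged into one kernel-verified Lean document; each statement's English description precedes it below -/
import Mathlib

section
/- Consider the composite problem minimize φ = f + g under the standing assumptions, and let x^{k+1} = prox_{γ_{k+1} g}(x^k − γ_{k+1}∇f(x^k)) for a sequence of strictly positive stepsizes γ_k. Then for every k ≥ 1 and every x* ∈ argmin φ, with ρ_{k+1} = γ_{k+1}/γ_k and P_k = φ(x^k) − min φ: ½‖x^{k+1} − x*‖² + γ_{k+1}(1 + ρ_{k+1})P_k + ¼‖x^k − x^{k+1}‖² ≤ ½‖x^k − x*‖² + ρ_{k+1}γ_{k+1}P_{k-1} − ρ_{k+1}² γ_k ℓ_k (1 − γ_k c_k) ‖x^{k-1} − x^k‖². -/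
open scoped RealInnerProductSpace
open Filter Topology

noncomputable section

/-- Euclidean space `ℝⁿ`. -/
abbrev En (n : ℕ) := EuclideanSpace ℝ (Fin n)

/-- Local Lipschitz-type estimate `ℓ = ⟨∇f(a) − ∇f(b), a − b⟩ / ‖a − b‖²`
(Lean's division by zero implements the `0/0 = 0` convention). -/
noncomputable def lEst {n : ℕ} (f' : En n → En n) (a b : En n) : ℝ :=
  ⟪f' a - f' b, a - b⟫ / ‖a - b‖ ^ 2

/-- Local (inverse) cocoercivity estimate `c = ‖∇f(a) − ∇f(b)‖² / ⟨∇f(a) − ∇f(b), a − b⟩`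
(convention `0/0 = 0`). -/
noncomputable def cEst {n : ℕ} (f' : En n → En n) (a b : En n) : ℝ :=
  ‖f' a - f' b‖ ^ 2 / ⟪f' a - f' b, a - b⟫

/-- `δ = γ ℓ (γ c − 1)`. -/
noncomputable def deltaEst {n : ℕ} (γ : ℝ) (f' : En n → En n) (a b : En n) : ℝ :=
  γ * lEst f' a b * (γ * cEst f' a b - 1)

/-- `g` is proper, lower semicontinuous and convex (extended-real-valued). -/
def ProperLscConvex {n : ℕ} (g : En n → EReal) : Prop :=
  (∀ x, g x ≠ ⊥) ∧ (∃ x, g x ≠ ⊤) ∧ LowerSemicontinuous g ∧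
    ∀ x y : En n, ∀ a b : ℝ, 0 ≤ a → 0 ≤ b → a + b = 1 →
      g (a • x + b • y) ≤ (a : EReal) * g x + (b : EReal) * g y

/-- `p = prox_{γ g}(u)`, characterized as minimality of `w ↦ g w + ‖w − u‖²/(2γ)`. -/
def IsProx {n : ℕ} (γ : ℝ) (g : En n → EReal) (u p : En n) : Prop :=
  ∀ w, g p + ((‖p - u‖ ^ 2 / (2 * γ) : ℝ) : EReal) ≤ g w + ((‖w - u‖ ^ 2 / (2 * γ) : ℝ) : EReal)

/-- Real value of `φ = f + g` (equals `f z + g z` whenever `g z` is finite). -/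
noncomputable def phiR {n : ℕ} (f : En n → ℝ) (g : En n → EReal) (z : En n) : ℝ :=
  f z + (g z).toReal

/-- `P = φ(z) − φ(x*)` (real-valued). -/
noncomputable def Pval {n : ℕ} (f : En n → ℝ) (g : En n → EReal) (xs z : En n) : ℝ :=
  phiR f g z - phiR f g xs

/-- adaPGM stepsize factor: `min{√(1+ρ), 1/(2√([δ]₊))}` with the convention `1/0 = +∞`
(so the second term is inactive when `[δ]₊ = 0`). -/
noncomputable def adaStep (ρ δ : ℝ) : ℝ :=
  if δ ≤ 0 then Real.sqrt (1 + ρ) else min (Real.sqrt (1 + ρ)) (1 / (2 * Real.sqrt δ))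

/-- Malitsky–Mishchenko stepsize: `min{γ√(1+γ/γ'), 1/(2L)}` with the convention `1/0 = +∞`. -/
noncomputable def mmStep (γprev γ L : ℝ) : ℝ :=
  if L = 0 then γ * Real.sqrt (1 + γ / γprev)
  else min (γ * Real.sqrt (1 + γ / γprev)) (1 / (2 * L))

/-- Lyapunov function `U_k = ½‖x^k − x*‖² + ¼‖x^k − x^{k-1}‖² + γ_k(1+ρ_k)P_{k-1}`,
with the Lean index shifted by one (Lean `x (k+1)` is the paper `x^k`). -/
noncomputable def Ufun {n : ℕ} (f : En n → ℝ) (g : En n → EReal) (xs : En n)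
    (x : ℕ → En n) (γ : ℕ → ℝ) (k : ℕ) : ℝ :=
  1/2 * ‖x (k+1) - xs‖ ^ 2 + 1/4 * ‖x (k+1) - x k‖ ^ 2
    + γ (k+1) * (1 + γ (k+1) / γ k) * Pval f g xs (x k)

section AuxLemmas

lemma hasDerivAt_line {n : ℕ} {f : En n → ℝ} {v a : En n} (hf : HasGradientAt f v a)
    (u : En n) : HasDerivAt (fun t : ℝ => f (a + t • u)) ⟪v, u⟫ 0 := by
  have h1 : HasDerivAt (fun t : ℝ => a + t • u) u 0 := by
    simpa using ((hasDerivAt_id (0 : ℝ)).smul_const u).const_add a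
  have hf' : HasFDerivAt f ((InnerProductSpace.toDual ℝ (En n)) v) (a + (0:ℝ) • u) := by
    simpa using hf.hasFDerivAt
  have h2 := hf'.comp_hasDerivAt (x := (0:ℝ)) h1
  simpa [InnerProductSpace.toDual_apply_apply, Function.comp_def] using h2

lemma grad_convex {n : ℕ} {f : En n → ℝ} (hconv : ConvexOn ℝ Set.univ f)
    {v a : En n} (hv : HasGradientAt f v a) (x : En n) :
    f a + ⟪v, x - a⟫ ≤ f x := by
  have hd := hasDerivAt_line hv (x - a)
  have htend : Tendsto (slope (fun t : ℝ => f (a + t • (x - a))) 0) (𝓝[>] 0)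
      (𝓝 ⟪v, x - a⟫) :=
    (hasDerivAt_iff_tendsto_slope.mp hd).mono_left
      (nhdsWithin_mono _ (fun t ht => ne_of_gt ht))
  have key : ⟪v, x - a⟫ ≤ f x - f a := by
    refine le_of_tendsto htend ?_
    filter_upwards [Ioc_mem_nhdsGT_of_mem (by norm_num : (0:ℝ) ∈ Set.Ico 0 1)] with t ht
    have ht0 : 0 < t := ht.1
    have ht1 : t ≤ 1 := ht.2
    have hc := hconv.2 (Set.mem_univ x) (Set.mem_univ a)
      (le_of_lt ht0) (by linarith : (0:ℝ) ≤ 1 - t) (by ring)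
    have heq : a + t • (x - a) = t • x + (1 - t) • a := by module
    rw [slope_def_field, heq]
    have h0 : a + (0:ℝ) • (x - a) = a := by module
    rw [h0, sub_zero, div_le_iff₀ ht0]
    simp only [smul_eq_mul] at hc
    nlinarith
  linarith

lemma minorant_eq_grad {n : ℕ} {f : En n → ℝ} {v w a : En n} (hv : HasGradientAt f v a)
    (hw : ∀ x, f a + ⟪w, x - a⟫ ≤ f x) : w = v := by
  set u := v - w with hu
  have hd : HasDerivAt (fun t : ℝ => f (a + t • u) - t * ⟪w, u⟫) (⟪v, u⟫ - ⟪w, u⟫) 0 := by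
    simpa [Pi.sub_def] using (hasDerivAt_line hv u).sub ((hasDerivAt_id (0:ℝ)).mul_const ⟪w, u⟫)
  have hmin : IsLocalMin (fun t : ℝ => f (a + t • u) - t * ⟪w, u⟫) 0 := by
    apply Filter.Eventually.of_forall
    intro t
    have := hw (a + t • u)
    have he : ⟪w, a + t • u - a⟫ = t * ⟪w, u⟫ := by
      rw [show a + t • u - a = t • u by module, real_inner_smul_right]
    simp only [he] at this
    simp only [zero_smul, add_zero, zero_mul, sub_zero]
    linarith
  have h0 := hmin.hasDerivAt_eq_zero hd
  have : ⟪v - w, v - w⟫ = 0 := by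
    rw [inner_sub_left]; rw [hu] at h0; linarith
  have hz : v - w = 0 := by
    exact inner_self_eq_zero.mp this
  have := sub_eq_zero.mp hz
  exact this.symm

lemma grad_eq_of_inner_zero {n : ℕ} {f : En n → ℝ} (hconv : ConvexOn ℝ Set.univ f)
    {v w a b : En n} (hv : HasGradientAt f v a) (hw : HasGradientAt f w b)
    (h0 : ⟪v - w, a - b⟫ = 0) : v = w := by
  have h1 := grad_convex hconv hv b
  have h2 := grad_convex hconv hw a
  have e0 : ⟪v, a - b⟫ = ⟪w, a - b⟫ := by
    rw [inner_sub_left] at h0; linarith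
  have e1 : ⟪v, b - a⟫ = -⟪v, a - b⟫ := by
    rw [show b - a = -(a - b) from (neg_sub a b).symm, inner_neg_right]
  have heq : f a = f b + ⟪w, a - b⟫ := by linarith
  have hmin : ∀ x, f a + ⟪w, x - a⟫ ≤ f x := by
    intro x
    have h3 := grad_convex hconv hw x
    have e2 : ⟪w, x - b⟫ - ⟪w, a - b⟫ = ⟪w, x - a⟫ := by
      rw [← inner_sub_right]; congr 1; module
    linarith
  exact (minorant_eq_grad hv hmin).symm


lemma prox_ne_top {n : ℕ} {g : En n → EReal} (hg : ProperLscConvex g) {γ : ℝ}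
    {u p : En n} (hp : IsProx γ g u p) : g p ≠ ⊤ := by
  obtain ⟨w, hw⟩ := hg.2.1
  intro h
  have hpw := hp w
  rw [h, EReal.top_add_of_ne_bot (by simp), top_le_iff] at hpw
  rw [← EReal.coe_toReal hw (hg.1 w), ← EReal.coe_add] at hpw
  exact EReal.coe_ne_top _ hpw

lemma prox_real {n : ℕ} {g : En n → EReal} (hg : ProperLscConvex g) {γ : ℝ} (hγ : 0 < γ)
    {u p : En n} (hp : IsProx γ g u p) (w : En n) {gp gw : ℝ}
    (hgp : g p = (gp : EReal)) (hgw : g w = (gw : EReal)) :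
    γ * (gp - gw) ≤ ⟪p - u, w - p⟫ := by
  set I := ⟪p - u, w - p⟫ with hI
  set Nw := ‖w - p‖ ^ 2 with hNw
  have hNw0 : 0 ≤ Nw := by positivity
  have h2γ : (0:ℝ) < 2 * γ := by linarith
  have key : ∀ t : ℝ, 0 < t → t ≤ 1 → 2 * γ * (gp - gw) ≤ 2 * I + t * Nw := by
    intro t ht0 ht1
    have hcc := hg.2.2.2 w p t (1 - t) (le_of_lt ht0) (by linarith) (by ring)
    have hprox := hp (t • w + (1 - t) • p)
    rw [hgp] at hprox
    rw [hgp, hgw] at hcc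
    have hcc' : g (t • w + (1 - t) • p) ≤ ((t * gw + (1 - t) * gp : ℝ) : EReal) := by
      rw [EReal.coe_add, EReal.coe_mul, EReal.coe_mul]; exact hcc
    have hchain := le_trans hprox (add_le_add hcc' le_rfl)
    rw [← EReal.coe_add, ← EReal.coe_add, EReal.coe_le_coe_iff] at hchain
    have hexp : ‖t • w + (1 - t) • p - u‖ ^ 2 = ‖p - u‖ ^ 2 + 2 * (t * I) + t ^ 2 * Nw := by
      have hdec : t • w + (1 - t) • p - u = (p - u) + t • (w - p) := by module
      rw [hdec, norm_add_sq_real, real_inner_smul_right, norm_smul, mul_pow,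
        Real.norm_eq_abs, sq_abs, hI, hNw]
    rw [hexp] at hchain
    have hsplit : (‖p - u‖ ^ 2 + 2 * (t * I) + t ^ 2 * Nw) / (2 * γ)
        = ‖p - u‖ ^ 2 / (2 * γ) + (2 * (t * I) + t ^ 2 * Nw) / (2 * γ) := by ring
    have h3 : t * (gp - gw) ≤ (2 * (t * I) + t ^ 2 * Nw) / (2 * γ) := by
      rw [hsplit] at hchain; linarith
    rw [le_div_iff₀ h2γ] at h3
    have h4 : t * (2 * γ * (gp - gw)) ≤ t * (2 * I + t * Nw) := by nlinarith [h3]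
    exact (mul_le_mul_iff_right₀ ht0).mp h4
  by_contra hcon
  push_neg at hcon
  set ε := 2 * γ * (gp - gw) - 2 * I with hε
  have hε0 : 0 < ε := by rw [hε]; nlinarith
  have ht0 : 0 < min 1 (ε / (2 * Nw + 1)) := by positivity
  have ht1 : min 1 (ε / (2 * Nw + 1)) ≤ 1 := min_le_left _ _
  have hk := key _ ht0 ht1
  have htle : min 1 (ε / (2 * Nw + 1)) ≤ ε / (2 * Nw + 1) := min_le_right _ _
  have hNpos : (0:ℝ) < 2 * Nw + 1 := by linarith
  have hmm : min 1 (ε / (2 * Nw + 1)) * Nw ≤ (ε / (2 * Nw + 1)) * Nw :=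
    mul_le_mul_of_nonneg_right htle hNw0
  have hfr : (ε / (2 * Nw + 1)) * Nw < ε := by
    rw [div_mul_eq_mul_div, div_lt_iff₀ hNpos]; nlinarith
  linarith

end AuxLemmas

set_option maxHeartbeats 2000000 in
/-- descent inequality for the proximal gradient method
(Lemma "thm:PG:descent"), stated with extended-real-valued `φ = f + g`. -/
theorem PGM_descent_inequality {n : ℕ}
    (f : En n → ℝ) (f' : En n → En n) (g : En n → EReal)
    (hconv : ConvexOn ℝ Set.univ f)
    (hgrad : ∀ z, HasGradientAt f (f' z) z)
    (hlip : LocallyLipschitz f')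
    (hg : ProperLscConvex g)
    (γ : ℕ → ℝ) (hγpos : ∀ k, 0 < γ k)
    (x : ℕ → En n)
    (hstep : ∀ k, IsProx (γ (k+1)) g (x k - γ (k+1) • f' (x k)) (x (k+1)))
    (xs : En n) (hxs : ∀ w, (f xs : EReal) + g xs ≤ (f w : EReal) + g w)
    (k : ℕ) (hk : 1 ≤ k) :
    ((1/2 * ‖x (k+1) - xs‖ ^ 2 + 1/4 * ‖x k - x (k+1)‖ ^ 2 : ℝ) : EReal)
        + ((γ (k+1) * (1 + γ (k+1) / γ k) : ℝ) : EReal)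
            * (((f (x k) : EReal) + g (x k)) - ((f xs : EReal) + g xs))
      ≤ ((1/2 * ‖x k - xs‖ ^ 2
            - (γ (k+1) / γ k) ^ 2 * γ k * lEst f' (x (k-1)) (x k)
              * (1 - γ k * cEst f' (x (k-1)) (x k)) * ‖x (k-1) - x k‖ ^ 2 : ℝ) : EReal)
        + ((γ (k+1) / γ k * γ (k+1) : ℝ) : EReal)
            * (((f (x (k-1)) : EReal) + g (x (k-1))) - ((f xs : EReal) + g xs)) := by
  obtain ⟨j, rfl⟩ : ∃ j, k = j + 1 := ⟨k - 1, by omega⟩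
  simp only [Nat.add_sub_cancel]
  have hσ : 0 < γ (j + 1) := hγpos _
  have hγ' : 0 < γ (j + 2) := hγpos _
  set a := x j with ha
  set b := x (j + 1) with hb
  set c := x (j + 2) with hc
  set σ := γ (j + 1) with hσd
  set γ2 := γ (j + 2) with hγ2d
  obtain ⟨w₀, hw₀⟩ := hg.2.1
  have hpb : IsProx σ g (a - σ • f' a) b := hstep j
  have hpc : IsProx γ2 g (b - γ2 • f' b) c := hstep (j + 1)
  have hgb_top : g b ≠ ⊤ := prox_ne_top hg hpb
  have hgc_top : g c ≠ ⊤ := prox_ne_top hg hpc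
  have hgs_top : g xs ≠ ⊤ := by
    intro h
    have hx := hxs w₀
    rw [h] at hx
    rw [show ((f xs : ℝ) : EReal) + ⊤ = ⊤ from EReal.coe_add_top _, top_le_iff] at hx
    rw [← EReal.coe_toReal hw₀ (hg.1 w₀), ← EReal.coe_add] at hx
    exact EReal.coe_ne_top _ hx
  obtain ⟨gs, hgs⟩ : ∃ r : ℝ, g xs = (r : EReal) :=
    ⟨(g xs).toReal, (EReal.coe_toReal hgs_top (hg.1 xs)).symm⟩
  obtain ⟨gb, hgb⟩ : ∃ r : ℝ, g b = (r : EReal) :=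
    ⟨(g b).toReal, (EReal.coe_toReal hgb_top (hg.1 b)).symm⟩
  obtain ⟨gc, hgc⟩ : ∃ r : ℝ, g c = (r : EReal) :=
    ⟨(g c).toReal, (EReal.coe_toReal hgc_top (hg.1 c)).symm⟩
  by_cases hga_top : g a = ⊤
  · -- right-hand side is ⊤
    rw [hga_top, hgs]
    have e1 : ((f a : ℝ) : EReal) + ⊤ = ⊤ := EReal.coe_add_top _
    have e2 : ((f xs : ℝ) : EReal) + (gs : EReal) = ((f xs + gs : ℝ) : EReal) :=
      (EReal.coe_add _ _).symm
    rw [e1, e2, EReal.top_sub_coe]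
    have e3 : ((γ2 / σ * γ2 : ℝ) : EReal) * ⊤ = ⊤ :=
      EReal.coe_mul_top_of_pos (by positivity)
    rw [e3, EReal.coe_add_top]
    exact le_top
  obtain ⟨ga, hga⟩ : ∃ r : ℝ, g a = (r : EReal) :=
    ⟨(g a).toReal, (EReal.coe_toReal hga_top (hg.1 a)).symm⟩
  rw [hga, hgb, hgs]
  rw [show ((f b : ℝ) : EReal) + (gb : EReal) = ((f b + gb : ℝ) : EReal) from
      (EReal.coe_add _ _).symm,
    show ((f a : ℝ) : EReal) + (ga : EReal) = ((f a + ga : ℝ) : EReal) from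
      (EReal.coe_add _ _).symm,
    show ((f xs : ℝ) : EReal) + (gs : EReal) = ((f xs + gs : ℝ) : EReal) from
      (EReal.coe_add _ _).symm,
    ← EReal.coe_sub, ← EReal.coe_sub, ← EReal.coe_mul, ← EReal.coe_mul,
    ← EReal.coe_add, ← EReal.coe_add, EReal.coe_le_coe_iff]
  -- now a purely real inequality
  have Hcs := grad_convex hconv (hgrad b) xs
  have Hca := grad_convex hconv (hgrad b) a
  have H1 := prox_real hg hγ' hpc xs hgc hgs
  have H2 := prox_real hg hσ hpb c hgb hgc
  have H3 := prox_real hg hσ hpb a hgb hga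
  -- penalty identity
  have hpen : (γ2 / σ) ^ 2 * σ * lEst f' a b * (1 - σ * cEst f' a b) * ‖a - b‖ ^ 2
      = (γ2 / σ) ^ 2 * (σ * ⟪f' a - f' b, a - b⟫ - σ ^ 2 * ‖f' a - f' b‖ ^ 2) := by
    by_cases hD : ⟪f' a - f' b, a - b⟫ = 0
    · have hvw : f' a = f' b := grad_eq_of_inner_zero hconv (hgrad a) (hgrad b) hD
      simp only [lEst, cEst]
      rw [hD, hvw]
      simp
    · have hnab : ‖a - b‖ ≠ 0 := by
        intro hz
        rw [norm_eq_zero] at hz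
        rw [hz] at hD
        simp at hD
      have hq : (‖a - b‖:ℝ) ^ 2 ≠ 0 := pow_ne_zero _ hnab
      simp only [lEst, cEst]
      generalize hDq : ⟪f' a - f' b, a - b⟫ = D at hD ⊢
      generalize ‖f' a - f' b‖ ^ 2 = N
      generalize hqq : ‖a - b‖ ^ 2 = q at hq ⊢
      field_simp
  rw [hpen]
  -- introduce ρ
  set ρ := γ2 / σ with hρ
  have hρpos : 0 < ρ := by positivity
  have hγ2σ : γ2 = ρ * σ := by rw [hρ, div_mul_cancel₀ _ hσ.ne']
  rw [hγ2σ] at H1 ⊢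
  -- Young's inequality ingredient
  have young : (0:ℝ) ≤ ⟪ρ • (a - b - σ • (f' a - f' b)) - (2:ℝ)⁻¹ • (b - c),
      ρ • (a - b - σ • (f' a - f' b)) - (2:ℝ)⁻¹ • (b - c)⟫ := real_inner_self_nonneg
  -- scaled hypotheses
  have H2s := mul_le_mul_of_nonneg_left H2 hρpos.le
  have H3s := mul_le_mul_of_nonneg_left H3 (by positivity : (0:ℝ) ≤ ρ ^ 2)
  have Hcss := mul_le_mul_of_nonneg_left Hcs (by positivity : (0:ℝ) ≤ ρ * σ)
  have Hcas := mul_le_mul_of_nonneg_left Hca (by positivity : (0:ℝ) ≤ ρ ^ 2 * σ)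
  -- expand all norms and inner products to atoms
  simp only [← real_inner_self_eq_norm_sq] at H1 H2s H3s Hcss Hcas young ⊢
  simp only [inner_sub_left, inner_sub_right, real_inner_smul_left,
    real_inner_smul_right] at H1 H2s H3s Hcss Hcas young ⊢
  simp only [real_inner_comm b a, real_inner_comm c a, real_inner_comm xs a,
    real_inner_comm (f' a) a, real_inner_comm (f' b) a, real_inner_comm c b,
    real_inner_comm xs b, real_inner_comm (f' a) b, real_inner_comm (f' b) b,
    real_inner_comm xs c, real_inner_comm (f' a) c, real_inner_comm (f' b) c,
    real_inner_comm (f' a) xs, real_inner_comm (f' b) xs,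
    real_inner_comm (f' b) (f' a)] at H1 H2s H3s Hcss Hcas young ⊢
  have c1 := real_inner_comm a b
  have c2 := real_inner_comm a c
  have c3 := real_inner_comm a xs
  have c4 := real_inner_comm a (f' a)
  have c5 := real_inner_comm a (f' b)
  have c6 := real_inner_comm b c
  have c7 := real_inner_comm b xs
  have c8 := real_inner_comm b (f' a)
  have c9 := real_inner_comm b (f' b)
  have c10 := real_inner_comm c xs
  have c11 := real_inner_comm c (f' a)
  have c12 := real_inner_comm c (f' b)
  have c13 := real_inner_comm xs (f' a)
  have c14 := real_inner_comm xs (f' b)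
  have c15 := real_inner_comm (f' a) (f' b)
  linarith [H1, H2s, H3s, Hcss, Hcas, young, c1, c2, c3, c4, c5, c6, c7, c8, c9,
    c10, c11, c12, c13, c14, c15]
end
end

section
/- Consider the composite problem minimize φ = f + g under the standing assumptions, and let x^{k+1} = prox_{γ_{k+1} g}(x^k − γ_{k+1}∇f(x^k)) for strictly positive stepsizes γ_k. Then for every k ≥ 1, every x* ∈ argmin φ, every ε_{k+1} > 0 and every θ_{k+1} ≥ 0, with ρ_{k+1} = γ_{k+1}/γ_k and P_k = φ(x^k) − min φ: ½‖x^{k+1} − x*‖² + γ_{k+1}(1 + θ_{k+1})P_k + ((1 − ε_{k+1}ρ_{k+1})/2)‖x^k − x^{k+1}‖² ≤ ½‖x^k − x*‖² + θ_{k+1}γ_{k+1}P_{k-1} + ρ_{k+1}( (1 − γ_kℓ_k(2 − γ_kc_k))/(2ε_{k+1}) − θ_{k+1}(1 − γ_kℓ_k) ) ‖x^{k-1} − x^k‖². -/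
open scoped RealInnerProductSpace
open Filter

noncomputable section

open Topology in
lemma grad_ineq {n : ℕ} {f : En n → ℝ} (hconv : ConvexOn ℝ Set.univ f)
    {gz : En n} {z : En n} (hf : HasGradientAt f gz z) (u : En n) :
    f z + ⟪gz, u - z⟫ ≤ f u := by
  have hline : HasDerivAt (fun t : ℝ => f (z + t • (u - z))) ⟪gz, u - z⟫ 0 := by
    have h1 : HasDerivAt (fun t : ℝ => z + t • (u - z)) (u - z) 0 := by
      simpa using ((hasDerivAt_id (0:ℝ)).smul_const (u - z)).const_add z
    have h2 := hf.hasFDerivAt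
    have h3 : HasFDerivAt f (InnerProductSpace.toDual ℝ (En n) gz) (z + (0:ℝ) • (u - z)) := by
      simpa using h2
    exact (h3.comp_hasDerivAt 0 h1).congr_deriv (by simp)
  have hslope : Tendsto (slope (fun t : ℝ => f (z + t • (u - z))) 0) (𝓝[>] 0)
      (𝓝 ⟪gz, u - z⟫) := by
    have := hasDerivAt_iff_tendsto_slope.mp hline
    exact this.mono_left (nhdsWithin_mono 0 (fun t ht => ne_of_gt ht))
  have hbound : ∀ t ∈ Set.Ioc (0:ℝ) 1,
      slope (fun t : ℝ => f (z + t • (u - z))) 0 t ≤ f u - f z := by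
    intro t ht
    have hcv := hconv.2 (Set.mem_univ z) (Set.mem_univ u) (by linarith [ht.2] : (0:ℝ) ≤ 1 - t)
      (le_of_lt ht.1) (by ring)
    have heq : (1 - t) • z + t • u = z + t • (u - z) := by
      rw [sub_smul, one_smul, smul_sub]; abel
    rw [heq] at hcv
    rw [slope_def_field]
    have : (f (z + t • (u - z)) - f z) / t ≤ f u - f z := by
      rw [div_le_iff₀ ht.1]
      have : f (z + t • (u - z)) ≤ (1 - t) * f z + t * f u := by simpa [smul_eq_mul] using hcv
      nlinarith
    simpa [div_eq_inv_mul, sub_div] using this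
  have : ⟪gz, u - z⟫ ≤ f u - f z := by
    refine le_of_tendsto hslope ?_
    filter_upwards [Ioc_mem_nhdsGT_of_mem (by norm_num : (0:ℝ) ∈ Set.Ico (0:ℝ) 1)] with t ht
      using hbound t ht
  linarith

open Topology in
lemma grad_eq_of_inner_nonpos {n : ℕ} {f : En n → ℝ} (hconv : ConvexOn ℝ Set.univ f)
    {gy gz : En n} {y z : En n} (hfy : HasGradientAt f gy y) (hfz : HasGradientAt f gz z)
    (h : ⟪gy - gz, y - z⟫ ≤ 0) : gy = gz := by
  -- f y - f z = ⟪gy, y - z⟫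
  have h1 := grad_ineq hconv hfz y
  have h2 := grad_ineq hconv hfy z
  have hsplit : ⟪gy - gz, y - z⟫ = ⟪gy, y - z⟫ - ⟪gz, y - z⟫ := by
    rw [inner_sub_left]
  have h2' : ⟪gy, z - y⟫ = -⟪gy, y - z⟫ := by
    rw [← inner_neg_right]; congr 1; abel
  have hkey : f y = f z + ⟪gy, y - z⟫ := by
    rw [h2'] at h2; linarith
  -- h(u) = f u - ⟪gy, u⟫ has global min at z
  have hmin : ∀ u, f z - ⟪gy, z⟫ ≤ f u - ⟪gy, u⟫ := by
    intro u
    have := grad_ineq hconv hfy u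
    have e1 : ⟪gy, u - y⟫ = ⟪gy, u⟫ - ⟪gy, y⟫ := by rw [inner_sub_right]
    have e2 : ⟪gy, y - z⟫ = ⟪gy, y⟫ - ⟪gy, z⟫ := by rw [inner_sub_right]
    rw [e1] at this; rw [e2] at hkey; linarith
  -- gradient of u ↦ f u - ⟪gy, u⟫ at z is gz - gy, and z is a local min
  have hgrad : HasFDerivAt (fun u => f u - ⟪gy, u⟫)
      (InnerProductSpace.toDual ℝ (En n) gz - innerSL ℝ gy) z :=
    hfz.hasFDerivAt.sub (innerSL ℝ gy).hasFDerivAt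
  have hloc : IsLocalMin (fun u => f u - ⟪gy, u⟫) z :=
    IsMinOn.isLocalMin (fun u _ => hmin u) (Filter.univ_mem)
  have hzero := hloc.hasFDerivAt_eq_zero hgrad
  have happ : ⟪gz, gz - gy⟫ - ⟪gy, gz - gy⟫ = 0 := by
    have := congrArg (fun L => L (gz - gy)) hzero
    simpa [InnerProductSpace.toDual_apply_apply] using this
  have : ⟪gz - gy, gz - gy⟫ = 0 := by
    rw [inner_sub_left]; linarith
  have := inner_self_eq_zero.mp this
  have : gz - gy = 0 := this
  linear_combination (norm := abel) -this

open Topology in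
lemma prox_lin {n : ℕ} {g : En n → EReal}
    (hgconv : ∀ x y : En n, ∀ a b : ℝ, 0 ≤ a → 0 ≤ b → a + b = 1 →
      g (a • x + b • y) ≤ (a : EReal) * g x + (b : EReal) * g y)
    {γ : ℝ} (hγ : 0 < γ) {v p u : En n} (hp : IsProx γ g v p)
    (hpb : g p ≠ ⊥) (hpt : g p ≠ ⊤) (hub : g u ≠ ⊥) (hut : g u ≠ ⊤) :
    (g p).toReal - (g u).toReal ≤ ⟪p - v, u - p⟫ / γ := by
  set Gp := (g p).toReal with hGp
  set Gu := (g u).toReal with hGu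
  have hgp : g p = (Gp : EReal) := (EReal.coe_toReal hpt hpb).symm
  have hgu : g u = (Gu : EReal) := (EReal.coe_toReal hut hub).symm
  -- for each t ∈ (0,1]
  have key : ∀ t : ℝ, t ∈ Set.Ioc (0:ℝ) 1 →
      Gp - Gu ≤ ⟪p - v, u - p⟫ / γ + t * (‖u - p‖ ^ 2 / (2 * γ)) := by
    intro t ht
    have hprox := hp (p + t • (u - p))
    have hcv := hgconv p u (1 - t) t (by linarith [ht.2]) (le_of_lt ht.1) (by ring)
    have heq : (1 - t) • p + t • u = p + t • (u - p) := by
      rw [sub_smul, one_smul, smul_sub]; abel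
    rw [heq, hgp, hgu] at hcv
    rw [hgp] at hprox
    have hcv' : g (p + t • (u - p)) ≤ (((1 - t) * Gp + t * Gu : ℝ) : EReal) := by
      rw [EReal.coe_add, EReal.coe_mul, EReal.coe_mul]; exact hcv
    have hchain : ((Gp + ‖p - v‖ ^ 2 / (2 * γ) : ℝ) : EReal) ≤
        (((1 - t) * Gp + t * Gu + ‖p + t • (u - p) - v‖ ^ 2 / (2 * γ) : ℝ) : EReal) := by
      rw [EReal.coe_add, EReal.coe_add]
      calc ((Gp : ℝ) : EReal) + ((‖p - v‖ ^ 2 / (2 * γ) : ℝ) : EReal)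
          ≤ g (p + t • (u - p)) + ((‖p + t • (u - p) - v‖ ^ 2 / (2 * γ) : ℝ) : EReal) := hprox
        _ ≤ (((1 - t) * Gp + t * Gu : ℝ) : EReal)
              + ((‖p + t • (u - p) - v‖ ^ 2 / (2 * γ) : ℝ) : EReal) := by
            exact add_le_add_left hcv' _
    have hreal : Gp + ‖p - v‖ ^ 2 / (2 * γ) ≤
        (1 - t) * Gp + t * Gu + ‖p + t • (u - p) - v‖ ^ 2 / (2 * γ) :=
      EReal.coe_le_coe_iff.mp hchain
    have hexp : ‖p + t • (u - p) - v‖ ^ 2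
        = ‖p - v‖ ^ 2 + 2 * (t * ⟪p - v, u - p⟫) + t ^ 2 * ‖u - p‖ ^ 2 := by
      have : p + t • (u - p) - v = (p - v) + t • (u - p) := by abel
      rw [this, @norm_add_sq_real, real_inner_smul_right, norm_smul]
      simp [abs_of_pos ht.1]
      ring
    rw [hexp] at hreal
    have e : (‖p - v‖ ^ 2 + 2 * (t * ⟪p - v, u - p⟫) + t ^ 2 * ‖u - p‖ ^ 2) / (2 * γ)
        = ‖p - v‖ ^ 2 / (2 * γ) + t * (⟪p - v, u - p⟫ / γ + t * (‖u - p‖ ^ 2 / (2 * γ))) := by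
      field_simp; ring
    rw [e] at hreal
    have h2 : t * (Gp - Gu) ≤ t * (⟪p - v, u - p⟫ / γ + t * (‖u - p‖ ^ 2 / (2 * γ))) := by
      nlinarith [hreal]
    exact le_of_mul_le_mul_left h2 ht.1
  refine ge_of_tendsto (f := fun t : ℝ => ⟪p - v, u - p⟫ / γ + t * (‖u - p‖ ^ 2 / (2 * γ)))
    (x := 𝓝[>] (0:ℝ)) ?_ ?_
  · have : Tendsto (fun t : ℝ => ⟪p - v, u - p⟫ / γ + t * (‖u - p‖ ^ 2 / (2 * γ))) (𝓝 0)
        (𝓝 (⟪p - v, u - p⟫ / γ + 0 * (‖u - p‖ ^ 2 / (2 * γ)))) :=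
      ((tendsto_id.mul_const _).const_add _)
    simpa using this.mono_left nhdsWithin_le_nhds
  · filter_upwards [Ioc_mem_nhdsGT_of_mem (by norm_num : (0:ℝ) ∈ Set.Ico (0:ℝ) 1)] with t ht
      using key t ht

lemma keyscal (γ0 γ1 ε θ ℓ c Fy Fz Fs Gy Gz Gw Gs I1 I2 I3 I4 I5 I6 I7 Nd Ne Ns : ℝ)
    (hγ0 : γ0 ≠ 0) (hε : ε ≠ 0) (hI : I6 = I7 + ℓ * Nd) :
    (1/2 * (Ne + 2 * I1 + Ns)
      + (γ1 / γ0) * ((1 - γ0 * ℓ * (2 - γ0 * c)) / (2 * ε) - θ * (1 - γ0 * ℓ)) * Nd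
      + θ * γ1 * ((Fy + Gy) - (Fs + Gs)))
      - (1/2 * Ns + (1 - ε * (γ1 / γ0)) / 2 * Ne
        + γ1 * (1 + θ) * ((Fz + Gz) - (Fs + Gs)))
      = ((I1 - γ1 * I2) - (Gw - Gs) * γ1)
      + γ1 * (Fs - (Fz + (-I2 - I5)))
      + γ1 * (γ0⁻¹ * I3 - I4 - (Gz - Gw))
      + γ1 * (θ * (I6 - γ0⁻¹ * Nd) - θ * (Gz - Gy))
      + γ1 * (θ * Fy - θ * (Fz + I7))
      + (γ1 * γ0 / (2 * ε))
        * ((γ0⁻¹ ^ 2 * Nd - 2 * (γ0⁻¹ * (ℓ * Nd)) + ℓ * c * Nd)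
          - 2 * ((ε / γ0) * (γ0⁻¹ * I3 - I4 + I5))
          + (ε / γ0) ^ 2 * Ne) := by
  subst hI
  field_simp
  ring

lemma core {n : ℕ} (y z w xs fy' fz' : En n) (γ0 γ1 ε θ ℓ c Fy Fz Fs Gy Gz Gw Gs : ℝ)
    (hγ0 : 0 < γ0) (hγ1 : 0 < γ1) (hε : 0 < ε) (hθ : 0 ≤ θ)
    (h1 : Gw - Gs ≤ ⟪w - (z - γ1 • fz'), xs - w⟫ / γ1)
    (h2 : Gz - Gw ≤ ⟪z - (y - γ0 • fy'), w - z⟫ / γ0)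
    (h3 : θ * (Gz - Gy) ≤ θ * (⟪z - (y - γ0 • fy'), y - z⟫ / γ0))
    (c1 : Fz + ⟪fz', xs - z⟫ ≤ Fs)
    (c3 : θ * (Fz + ⟪fz', y - z⟫) ≤ θ * Fy)
    (hl : ⟪fy' - fz', y - z⟫ = ℓ * ‖y - z‖ ^ 2)
    (hc : ‖fy' - fz'‖ ^ 2 = ℓ * c * ‖y - z‖ ^ 2) :
    1/2 * ‖w - xs‖ ^ 2 + (1 - ε * (γ1 / γ0)) / 2 * ‖z - w‖ ^ 2
      + γ1 * (1 + θ) * ((Fz + Gz) - (Fs + Gs))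
    ≤ 1/2 * ‖z - xs‖ ^ 2
      + (γ1 / γ0) * ((1 - γ0 * ℓ * (2 - γ0 * c)) / (2 * ε) - θ * (1 - γ0 * ℓ)) * ‖y - z‖ ^ 2
      + θ * γ1 * ((Fy + Gy) - (Fs + Gs)) := by
  have hγ0' : (γ0 : ℝ) ≠ 0 := ne_of_gt hγ0
  have hε' : (ε : ℝ) ≠ 0 := ne_of_gt hε
  set q : En n := γ0⁻¹ • (y - z) - (fy' - fz') with hq
  -- vector/inner expansions
  have E1 : ⟪w - (z - γ1 • fz'), xs - w⟫
      = ⟪z - w, w - xs⟫ - γ1 * ⟪fz', w - xs⟫ := by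
    rw [show w - (z - γ1 • fz') = -(z - w) + γ1 • fz' by abel,
        show xs - w = -(w - xs) by abel]
    rw [inner_add_left, inner_neg_left, inner_neg_right, inner_neg_right,
        real_inner_smul_left]
    ring
  have E2 : ⟪z - (y - γ0 • fy'), w - z⟫
      = ⟪y - z, z - w⟫ - γ0 * ⟪fy', z - w⟫ := by
    rw [show z - (y - γ0 • fy') = -(y - z) + γ0 • fy' by abel,
        show w - z = -(z - w) by abel]
    rw [inner_add_left, inner_neg_left, inner_neg_right, inner_neg_right,
        real_inner_smul_left]
    ring
  have E3 : ⟪z - (y - γ0 • fy'), y - z⟫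
      = -‖y - z‖ ^ 2 + γ0 * ⟪fy', y - z⟫ := by
    rw [show z - (y - γ0 • fy') = -(y - z) + γ0 • fy' by abel]
    rw [inner_add_left, inner_neg_left, real_inner_smul_left,
        real_inner_self_eq_norm_sq]
  have E4 : ⟪fz', xs - z⟫ = -⟪fz', w - xs⟫ - ⟪fz', z - w⟫ := by
    rw [show xs - z = -(w - xs) - (z - w) by abel]
    rw [inner_sub_right, inner_neg_right]
  have hIqe : ⟪q, z - w⟫
      = γ0⁻¹ * ⟪y - z, z - w⟫ - ⟪fy', z - w⟫ + ⟪fz', z - w⟫ := by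
    rw [hq, inner_sub_left, inner_sub_left, real_inner_smul_left]
    ring
  have hq2 : ‖q‖ ^ 2 = γ0⁻¹ ^ 2 * ‖y - z‖ ^ 2 - 2 * (γ0⁻¹ * (ℓ * ‖y - z‖ ^ 2))
      + ℓ * c * ‖y - z‖ ^ 2 := by
    rw [hq, @norm_sub_sq_real, real_inner_smul_left, real_inner_comm, hl, hc,
        norm_smul]
    rw [show ‖γ0⁻¹‖ = γ0⁻¹ from by
      rw [Real.norm_eq_abs, abs_of_pos (inv_pos.mpr hγ0)]]
    ring
  have T6 : ‖z - xs‖ ^ 2 = ‖z - w‖ ^ 2 + 2 * ⟪z - w, w - xs⟫ + ‖w - xs‖ ^ 2 := by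
    rw [show z - xs = (z - w) + (w - xs) by abel, @norm_add_sq_real]
  -- slack terms
  have s1 : 0 ≤ (⟪z - w, w - xs⟫ - γ1 * ⟪fz', w - xs⟫) - (Gw - Gs) * γ1 := by
    rw [E1] at h1
    have := (le_div_iff₀ hγ1).mp h1
    linarith
  have s2 : 0 ≤ γ1 * (Fs - (Fz + (-⟪fz', w - xs⟫ - ⟪fz', z - w⟫))) := by
    rw [E4] at c1
    exact mul_nonneg hγ1.le (by linarith)
  have s3 : 0 ≤ γ1 * (γ0⁻¹ * ⟪y - z, z - w⟫ - ⟪fy', z - w⟫ - (Gz - Gw)) := by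
    rw [E2] at h2
    have hx : (⟪y - z, z - w⟫ - γ0 * ⟪fy', z - w⟫) / γ0
        = γ0⁻¹ * ⟪y - z, z - w⟫ - ⟪fy', z - w⟫ := by field_simp
    rw [hx] at h2
    exact mul_nonneg hγ1.le (by linarith)
  have s4 : 0 ≤ γ1 * (θ * (⟪fy', y - z⟫ - γ0⁻¹ * ‖y - z‖ ^ 2) - θ * (Gz - Gy)) := by
    rw [E3] at h3
    have hx : (-‖y - z‖ ^ 2 + γ0 * ⟪fy', y - z⟫) / γ0
        = ⟪fy', y - z⟫ - γ0⁻¹ * ‖y - z‖ ^ 2 := by field_simp; ring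
    rw [hx] at h3
    exact mul_nonneg hγ1.le (by linarith)
  have s5 : 0 ≤ γ1 * (θ * Fy - θ * (Fz + ⟪fz', y - z⟫)) :=
    mul_nonneg hγ1.le (by linarith)
  have hexp : ‖q - (ε/γ0) • (z - w)‖ ^ 2
      = ‖q‖ ^ 2 - 2 * ((ε/γ0) * ⟪q, z - w⟫) + (ε/γ0) ^ 2 * ‖z - w‖ ^ 2 := by
    rw [@norm_sub_sq_real, real_inner_smul_right, norm_smul]
    rw [show ‖ε/γ0‖ = ε/γ0 from by
      rw [Real.norm_eq_abs, abs_of_pos (div_pos hε hγ0)]]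
    ring
  have s6 : 0 ≤ (γ1 * γ0 / (2 * ε))
      * (‖q‖ ^ 2 - 2 * ((ε/γ0) * ⟪q, z - w⟫) + (ε/γ0) ^ 2 * ‖z - w‖ ^ 2) := by
    rw [← hexp]; positivity
  rw [hq2, hIqe] at s6
  have hI6 : ⟪fy', y - z⟫ = ⟪fz', y - z⟫ + ℓ * ‖y - z‖ ^ 2 := by
    rw [inner_sub_left] at hl; linarith
  have key := keyscal γ0 γ1 ε θ ℓ c Fy Fz Fs Gy Gz Gw Gs
    ⟪z - w, w - xs⟫ ⟪fz', w - xs⟫ ⟪y - z, z - w⟫ ⟪fy', z - w⟫ ⟪fz', z - w⟫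
    ⟪fy', y - z⟫ ⟪fz', y - z⟫ (‖y - z‖ ^ 2) (‖z - w‖ ^ 2) (‖w - xs‖ ^ 2) hγ0' hε' hI6
  linarith [s1, s2, s3, s4, s5, s6, key, T6]

/-- parametric descent inequality for the proximal gradient method
(inequality (eq:PG:descentdelta)), with free parameters `ε_{k+1} > 0` and `θ_{k+1} ≥ 0`. -/
theorem PGM_parametric_descent_inequality {n : ℕ}
    (f : En n → ℝ) (f' : En n → En n) (g : En n → EReal)
    (hconv : ConvexOn ℝ Set.univ f)
    (hgrad : ∀ z, HasGradientAt f (f' z) z)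
    (hlip : LocallyLipschitz f')
    (hg : ProperLscConvex g)
    (γ : ℕ → ℝ) (hγpos : ∀ k, 0 < γ k)
    (x : ℕ → En n)
    (hstep : ∀ k, IsProx (γ (k+1)) g (x k - γ (k+1) • f' (x k)) (x (k+1)))
    (xs : En n) (hxs : ∀ w, (f xs : EReal) + g xs ≤ (f w : EReal) + g w)
    (k : ℕ) (hk : 1 ≤ k)
    (ε θ : ℝ) (hε : 0 < ε) (hθ : 0 ≤ θ) :
    ((1/2 * ‖x (k+1) - xs‖ ^ 2
        + (1 - ε * (γ (k+1) / γ k)) / 2 * ‖x k - x (k+1)‖ ^ 2 : ℝ) : EReal)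
        + ((γ (k+1) * (1 + θ) : ℝ) : EReal)
            * (((f (x k) : EReal) + g (x k)) - ((f xs : EReal) + g xs))
      ≤ ((1/2 * ‖x k - xs‖ ^ 2
            + (γ (k+1) / γ k)
              * ((1 - γ k * lEst f' (x (k-1)) (x k) * (2 - γ k * cEst f' (x (k-1)) (x k)))
                    / (2 * ε)
                  - θ * (1 - γ k * lEst f' (x (k-1)) (x k)))
              * ‖x (k-1) - x k‖ ^ 2 : ℝ) : EReal)
        + ((θ * γ (k+1) : ℝ) : EReal)
            * (((f (x (k-1)) : EReal) + g (x (k-1))) - ((f xs : EReal) + g xs)) := by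
  obtain ⟨hgbot, ⟨w0, hw0⟩, _, hgconv⟩ := hg
  have hk1 : k - 1 + 1 = k := Nat.succ_pred_eq_of_pos hk
  have not_top : ∀ j, g (x (j+1)) ≠ ⊤ := by
    intro j htop
    have h := hstep j w0
    rw [htop] at h
    rw [EReal.top_add_coe] at h
    exact absurd h (not_le_of_gt (EReal.add_lt_top hw0 (EReal.coe_ne_top _)))
  have hz_ne_top : g (x k) ≠ ⊤ := by have := not_top (k-1); rwa [hk1] at this
  have hw_ne_top : g (x (k+1)) ≠ ⊤ := not_top k
  have hxs_ne_top : g xs ≠ ⊤ := by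
    intro htop
    have h := hxs (x k)
    rw [htop] at h
    rw [EReal.coe_add_top] at h
    exact absurd h (not_le_of_gt (EReal.add_lt_top (EReal.coe_ne_top _) hz_ne_top))
  have hp1 : IsProx (γ (k+1)) g (x k - γ (k+1) • f' (x k)) (x (k+1)) := hstep k
  have hp0 : IsProx (γ k) g (x (k-1) - γ k • f' (x (k-1))) (x k) := by
    have := hstep (k-1); rwa [hk1] at this
  set y := x (k-1) with hy
  set z := x k with hz
  set w := x (k+1) with hw
  have hgz : g z = (((g z).toReal : ℝ) : EReal) := (EReal.coe_toReal hz_ne_top (hgbot z)).symm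
  have hgw : g w = (((g w).toReal : ℝ) : EReal) := (EReal.coe_toReal hw_ne_top (hgbot w)).symm
  have hgxs : g xs = (((g xs).toReal : ℝ) : EReal) := (EReal.coe_toReal hxs_ne_top (hgbot xs)).symm
  -- the l/c identities
  have hzero : ⟪f' y - f' z, y - z⟫ = 0 → f' y = f' z := fun h =>
    grad_eq_of_inner_nonpos hconv (hgrad y) (hgrad z) (le_of_eq h)
  have hl : ⟪f' y - f' z, y - z⟫ = lEst f' y z * ‖y - z‖ ^ 2 := by
    by_cases hd : y - z = 0
    · rw [hd]; simp [lEst, hd]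
    · rw [lEst, div_mul_cancel₀]
      exact pow_ne_zero 2 (norm_ne_zero_iff.mpr hd)
  have hc : ‖f' y - f' z‖ ^ 2 = lEst f' y z * cEst f' y z * ‖y - z‖ ^ 2 := by
    by_cases hip : ⟪f' y - f' z, y - z⟫ = 0
    · have hΔ : f' y = f' z := hzero hip
      simp [lEst, cEst, hΔ]
    · have hd : y - z ≠ 0 := by
        intro h; exact hip (by rw [h, inner_zero_right])
      have hnd : ‖y - z‖ ^ 2 ≠ 0 := pow_ne_zero 2 (norm_ne_zero_iff.mpr hd)
      have hgen : ∀ (M I N : ℝ), I ≠ 0 → N ≠ 0 → I / N * (M / I) * N = M := by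
        intro M I N hI hN; field_simp
      rw [lEst, cEst]
      exact (hgen _ _ _ hip hnd).symm
  -- prox linearizations
  have h1 : (g w).toReal - (g xs).toReal ≤ ⟪w - (z - γ (k+1) • f' z), xs - w⟫ / γ (k+1) :=
    prox_lin hgconv (hγpos (k+1)) hp1 (hgbot w) hw_ne_top (hgbot xs) hxs_ne_top
  have h2 : (g z).toReal - (g w).toReal ≤ ⟪z - (y - γ k • f' y), w - z⟫ / γ k :=
    prox_lin hgconv (hγpos k) hp0 (hgbot z) hz_ne_top (hgbot w) hw_ne_top
  have c1 : f z + ⟪f' z, xs - z⟫ ≤ f xs := grad_ineq hconv (hgrad z) xs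
  have c3 : f z + ⟪f' z, y - z⟫ ≤ f y := grad_ineq hconv (hgrad z) y
  by_cases hytop : g y = ⊤
  · -- previous iterate has infinite g-value
    rcases eq_or_lt_of_le hθ with h0 | hpos
    · -- θ = 0 : the troublesome term vanishes
      subst h0
      have hcore := core y z w xs (f' y) (f' z) (γ k) (γ (k+1)) ε 0
        (lEst f' y z) (cEst f' y z) 0 (f z) (f xs) 0 (g z).toReal (g w).toReal (g xs).toReal
        (hγpos k) (hγpos (k+1)) hε le_rfl h1 h2 (by simp) c1 (by simp) hl hc
      have hzt : ((0 * γ (k+1) : ℝ) : EReal)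
          * (((f y : ℝ) : EReal) + g y - (((f xs : ℝ) : EReal) + g xs)) = 0 := by
        rw [show ((0 * γ (k+1) : ℝ) : EReal) = (0 : EReal) by norm_num]
        exact zero_mul _
      have e2 : ((f (x k) : ℝ) : EReal) + (((g z).toReal : ℝ) : EReal)
          - (((f xs : ℝ) : EReal) + (((g xs).toReal : ℝ) : EReal))
          = (((f z + (g z).toReal) - (f xs + (g xs).toReal) : ℝ) : EReal) := by
        norm_cast
      rw [hzt, hgz, hgxs, e2, ← EReal.coe_mul, ← EReal.coe_add, ← EReal.coe_zero,
        ← EReal.coe_add, EReal.coe_le_coe_iff]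
      linarith [hcore]
    · -- θ > 0 : right-hand side is +∞
      have hrhs : ((θ * γ (k+1) : ℝ) : EReal)
          * (((f y : ℝ) : EReal) + g y - (((f xs : ℝ) : EReal) + g xs)) = ⊤ := by
        rw [hytop, hgxs]
        rw [EReal.coe_add_top]
        have e4 : (⊤ : EReal) - (((f xs : ℝ) : EReal) + (((g xs).toReal : ℝ) : EReal)) = ⊤ := by
          rw [← EReal.coe_add]
          exact EReal.top_sub_coe _
        rw [e4]
        exact EReal.mul_top_of_pos (by exact_mod_cast mul_pos hpos (hγpos (k+1)))
      rw [hrhs, EReal.coe_add_top]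
      exact le_top
  · -- all values finite
    have h3 : (g z).toReal - (g y).toReal ≤ ⟪z - (y - γ k • f' y), y - z⟫ / γ k :=
      prox_lin hgconv (hγpos k) hp0 (hgbot z) hz_ne_top (hgbot y) hytop
    have hcore := core y z w xs (f' y) (f' z) (γ k) (γ (k+1)) ε θ
      (lEst f' y z) (cEst f' y z) (f y) (f z) (f xs) (g y).toReal (g z).toReal
      (g w).toReal (g xs).toReal
      (hγpos k) (hγpos (k+1)) hε hθ h1 h2
      (mul_le_mul_of_nonneg_left h3 hθ) c1
      (mul_le_mul_of_nonneg_left c3 hθ) hl hc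
    have hgy : g y = (((g y).toReal : ℝ) : EReal) := (EReal.coe_toReal hytop (hgbot y)).symm
    rw [hgz, hgxs, hgy]
    have e2 : ((f (x k) : ℝ) : EReal) + (((g z).toReal : ℝ) : EReal)
        - (((f xs : ℝ) : EReal) + (((g xs).toReal : ℝ) : EReal))
        = (((f z + (g z).toReal) - (f xs + (g xs).toReal) : ℝ) : EReal) := by norm_cast
    have e3 : ((f (x (k-1)) : ℝ) : EReal) + (((g y).toReal : ℝ) : EReal)
        - (((f xs : ℝ) : EReal) + (((g xs).toReal : ℝ) : EReal))
        = (((f y + (g y).toReal) - (f xs + (g xs).toReal) : ℝ) : EReal) := by norm_cast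
    rw [e2, e3, ← EReal.coe_mul, ← EReal.coe_mul, ← EReal.coe_add, ← EReal.coe_add,
      EReal.coe_le_coe_iff]
    linarith [hcore]
end
end

section
/- Let (γ_k)_{k ≥ −1} be a sequence of strictly positive reals satisfying γ_{k+1} ≤ γ_k√(1 + γ_k/γ_{k-1}) for all k ≥ 0. Then γ_{k+1}/γ_k ≤ max{ γ₀/γ₋₁, (1+√5)/2 } for every k ≥ 0. -/
/-- bound on the stepsize ratios. Indexing is shifted by one:
Lean `γ (k+1)` is the paper `γ_k` (so `γ 0 = γ₋₁`). If `γ_{k+1} ≤ γ_k√(1 + γ_k/γ_{k-1})`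
for all `k ≥ 0`, then `γ_{k+1}/γ_k ≤ max{γ₀/γ₋₁, (1+√5)/2}` for all `k ≥ 0`. -/
theorem stepsize_ratio_bound (γ : ℕ → ℝ) (hγpos : ∀ k, 0 < γ k)
    (hrec : ∀ k, γ (k+2) ≤ γ (k+1) * Real.sqrt (1 + γ (k+1) / γ k)) :
    ∀ k, γ (k+2) / γ (k+1) ≤ max (γ 1 / γ 0) ((1 + Real.sqrt 5) / 2) := by
  set M := max (γ 1 / γ 0) ((1 + Real.sqrt 5) / 2) with hM
  have hs5 : Real.sqrt 5 ≥ 2 := by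
    rw [show (2:ℝ) = Real.sqrt 4 by rw [show (4:ℝ) = 2^2 by norm_num, Real.sqrt_sq]; norm_num]
    exact Real.sqrt_le_sqrt (by norm_num)
  have hMphi : (1 + Real.sqrt 5) / 2 ≤ M := le_max_right _ _
  have hM1 : (1:ℝ) ≤ M := by nlinarith
  have hMsq : 1 + M ≤ M ^ 2 := by
    have h5 : Real.sqrt 5 ^ 2 = 5 := Real.sq_sqrt (by norm_num)
    nlinarith [hMphi, hs5]
  have key : ∀ k, γ (k+1) / γ k ≤ M := by
    intro k
    induction k with
    | zero => exact le_max_left _ _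
    | succ n ih =>
      have hp := hγpos (n+1)
      have hr : γ (n+2) / γ (n+1) ≤ Real.sqrt (1 + γ (n+1) / γ n) := by
        rw [div_le_iff₀ hp]
        calc γ (n+2) ≤ γ (n+1) * Real.sqrt (1 + γ (n+1) / γ n) := hrec n
          _ = Real.sqrt (1 + γ (n+1) / γ n) * γ (n+1) := by ring
      refine hr.trans ?_
      calc Real.sqrt (1 + γ (n+1) / γ n) ≤ Real.sqrt (M ^ 2) := by
            apply Real.sqrt_le_sqrt
            have := hMsq
            linarith
        _ = M := by rw [Real.sqrt_sq (by linarith)]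
  intro k
  exact key (k+1)
end

section
/- Consider the primal-dual setting. Let (γ_k) and (σ_k) be sequences of strictly positive reals, and starting from (x^{-1}, x⁰, y⁰) let (x^k, y^k) be generated by the primal-dual updates. Then for every k ≥ 1, every primal-dual solution (x*, y*), every ε_{k+1}, τ_{k+1}, μ_{k+1} > 0 and every η_{k+1} ≥ ‖Aᵀ(y^{k+1} − y^k)‖ / ‖y^{k+1} − y^k‖ (convention 0/0 = 0), writing ρ_{k+1} = γ_{k+1}/γ_k, α_k = γ_kℓ_k, β_k = γ_kc_k: 0 ≤ ½‖x^k − x*‖² − ½‖x^{k+1} − x*‖² + ((ε_{k+1}ρ_{k+1} + μ_{k+1}η_{k+1}γ_{k+1} − 1)/2)‖x^k − x^{k+1}‖² + ρ_{k+1}( (1 − α_k(2 − β_k))/(2ε_{k+1}) + τ_{k+1}η_{k+1}γ_{k+1}/2 − ρ_{k+1}(1 − α_k) )‖x^{k-1} − x^k‖² + (γ_{k+1}/(2σ_{k+1}))‖y^k − y*‖² − ( γ_{k+1}/(2σ_{k+1}) − (η_{k+1}γ_{k+1}/2)(1/μ_{k+1} + ρ_{k+1}/τ_{k+1}) )‖y^{k+1}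 − y^k‖² − (γ_{k+1}/(2σ_{k+1}))‖y^{k+1} − y*‖² + γ_{k+1}ρ_{k+1}P_{k-1} − γ_{k+1}(1 + ρ_{k+1})P_k − γ_{k+1}Q_{k+1}. -/
open scoped RealInnerProductSpace
open Filter

noncomputable section

/-- `v` is a subgradient of the extended-real-valued convex function `ψ` at `x`. -/
def ESubgrad {n : ℕ} (ψ : En n → EReal) (v x : En n) : Prop :=
  ∀ w, ψ x + ((⟪v, w - x⟫ : ℝ) : EReal) ≤ ψ w

/-- `(xs, ys)` is a primal-dual solution:
`0 ∈ −A xs + ∂h⋆(ys)` and `0 ∈ Aᵀ ys + ∇f(xs) + ∂g(xs)`. -/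
def IsPDSol {n m : ℕ} (f' : En n → En n) (g : En n → EReal) (hs : En m → EReal)
    (A : En n →L[ℝ] En m) (xs : En n) (ys : En m) : Prop :=
  ESubgrad hs (A xs) ys ∧
  ESubgrad g (-(ContinuousLinearMap.adjoint A ys) - f' xs) xs

/-- `P(z) = (f+g)(z) − (f+g)(x*) + ⟨z − x*, Aᵀ y*⟩` (extended-real-valued version). -/
noncomputable def Pw {n m : ℕ} (f : En n → ℝ) (g : En n → EReal)
    (A : En n →L[ℝ] En m) (xs : En n) (ys : En m) (z : En n) : EReal :=
  (((f z : EReal) + g z) - ((f xs : EReal) + g xs))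
    + ((⟪z - xs, ContinuousLinearMap.adjoint A ys⟫ : ℝ) : EReal)

/-- `Q(u) = h⋆(u) − h⋆(y*) + ⟨A x*, y* − u⟩` (extended-real-valued version). -/
noncomputable def Qw {n m : ℕ} (hs : En m → EReal)
    (A : En n →L[ℝ] En m) (xs : En n) (ys : En m) (u : En m) : EReal :=
  (hs u - hs ys) + ((⟪A xs, ys - u⟫ : ℝ) : EReal)

/-- Real-valued version of `P` (equal to `Pw` whenever the latter is finite). -/
noncomputable def PpdR {n m : ℕ} (f : En n → ℝ) (g : En n → EReal)
    (A : En n →L[ℝ] En m) (xs : En n) (ys : En m) (z : En n) : ℝ :=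
  (f z + (g z).toReal) - (f xs + (g xs).toReal)
    + ⟪z - xs, ContinuousLinearMap.adjoint A ys⟫

/-- Real-valued version of `Q` (equal to `Qw` whenever the latter is finite). -/
noncomputable def QpdR {n m : ℕ} (hs : En m → EReal)
    (A : En n →L[ℝ] En m) (xs : En n) (ys : En m) (u : En m) : ℝ :=
  (hs u).toReal - (hs ys).toReal + ⟪A xs, ys - u⟫

/-- The adaPDM stepsize:
`min{ γ√(1+γ/γ'), 1/(2νtη₊), γ√((1−4ξ(1+ε)²)/(2(1+ε)(√(δ²+(tη₊γ)²(1−4ξ(1+ε)²))+δ))) }`,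
with the convention `r/0 = +∞` in the last two terms (a term equal to `+∞` is
inactive in the min, which is implemented by replacing it with the first term). -/
noncomputable def pdStep (t ε ν γprev γcur δ ξ ηnext : ℝ) : ℝ :=
  let T1 := γcur * Real.sqrt (1 + γcur / γprev)
  let T2 := if ηnext = 0 then T1 else 1 / (2 * ν * t * ηnext)
  let D := 2 * (1 + ε) *
    (Real.sqrt (δ ^ 2 + (t * ηnext * γcur) ^ 2 * (1 - 4 * ξ * (1 + ε) ^ 2)) + δ)
  let T3 := if D ≤ 0 then T1 else γcur * Real.sqrt ((1 - 4 * ξ * (1 + ε) ^ 2) / D)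
  min T1 (min T2 T3)

/-- Primal-dual Lyapunov function
`U_k = ½‖x^k−x*‖² + ((1−4ξ_k(1+ε))/4)‖x^k−x^{k-1}‖² + (1/(2t²))‖y^k−y*‖² + γ_k(1+ρ_k)P_{k-1}`,
with the Lean index shifted by one (Lean `x (k+1)`, `y (k+1)`, `γ (k+1)`, `η (k+1)` are
the paper `x^k`, `y^k`, `γ_k`, `η_k`). -/
noncomputable def Upd {n m : ℕ} (t ε : ℝ) (f : En n → ℝ) (g : En n → EReal)
    (A : En n →L[ℝ] En m) (xs : En n) (ys : En m)
    (x : ℕ → En n) (y : ℕ → En m) (γ η : ℕ → ℝ) (k : ℕ) : ℝ :=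
  1/2 * ‖x (k+1) - xs‖ ^ 2
    + (1 - 4 * (t^2 * (η (k+1))^2 * (γ (k+1))^2) * (1+ε)) / 4 * ‖x (k+1) - x k‖ ^ 2
    + 1/(2*t^2) * ‖y (k+1) - ys‖ ^ 2
    + γ (k+1) * (1 + γ (k+1) / γ k) * PpdR f g A xs ys (x k)


section AuxLemmas

lemma convex_grad_ineq {n : ℕ} {f : En n → ℝ} {f' : En n → En n}
    (hconv : ConvexOn ℝ Set.univ f) (hgrad : ∀ z, HasGradientAt f (f' z) z)
    (a b : En n) : f a + ⟪f' a, b - a⟫ ≤ f b := by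
  have hline : ∀ t : ℝ, HasDerivAt (fun t : ℝ => a + t • (b - a)) (b - a) t := by
    intro t
    simpa using ((hasDerivAt_id t).smul_const (b - a)).const_add a
  set φ : ℝ → ℝ := fun t => f (a + t • (b - a)) with hφ
  have hd : HasDerivAt φ ⟪f' (a + (0:ℝ) • (b - a)), b - a⟫ 0 := by
    have hF := (hgrad (a + (0:ℝ) • (b - a))).hasFDerivAt
    have := hF.comp_hasDerivAt 0 (hline 0)
    simp at this ⊢; exact this
  have hφconv : ConvexOn ℝ Set.univ φ := by
    have h2 : ConvexOn ℝ (((AffineMap.lineMap a b : ℝ →ᵃ[ℝ] En n)) ⁻¹' Set.univ)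
        (f ∘ (AffineMap.lineMap a b : ℝ →ᵃ[ℝ] En n)) := hconv.comp_affineMap _
    have heq : (f ∘ (AffineMap.lineMap a b : ℝ →ᵃ[ℝ] En n)) = φ := by
      funext t
      simp [AffineMap.lineMap_apply, hφ]
      congr 1
      module
    rw [heq] at h2
    simpa using h2
  have hslope := hφconv.le_slope_of_hasDerivAt (Set.mem_univ (0:ℝ)) (Set.mem_univ (1:ℝ))
    zero_lt_one hd
  have h0 : φ 0 = f a := by simp [hφ]
  have h1 : φ 1 = f b := by simp [hφ]
  have hsl : slope φ 0 1 = f b - f a := by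
    rw [slope_def_field, h0, h1]; simp
  rw [hsl] at hslope
  have hpt : (a + (0:ℝ) • (b - a)) = a := by simp
  rw [hpt] at hslope
  linarith

lemma grad_eq_of_inner_eq_zero {n : ℕ} {f : En n → ℝ} {f' : En n → En n}
    (hconv : ConvexOn ℝ Set.univ f) (hgrad : ∀ z, HasGradientAt f (f' z) z)
    {a b : En n} (h0 : ⟪f' a - f' b, a - b⟫ = 0) : f' a = f' b := by
  have hba := convex_grad_ineq hconv hgrad b a
  have hab := convex_grad_ineq hconv hgrad a b
  have hsum : ⟪f' b, a - b⟫ + ⟪f' a, b - a⟫ = 0 := by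
    have h1 : ⟪f' a - f' b, a - b⟫ = ⟪f' a, a - b⟫ - ⟪f' b, a - b⟫ := inner_sub_left _ _ _
    have h2 : ⟪f' a, b - a⟫ = -⟪f' a, a - b⟫ := by
      rw [← inner_neg_right]; congr 1; abel
    rw [h2]; linarith [h0, h1]
  set h : En n → ℝ := fun w => f w - (f b + ⟪f' b, w - b⟫) with hh
  have hnn : ∀ w, 0 ≤ h w := by
    intro w
    have := convex_grad_ineq hconv hgrad b w
    simp only [hh]; linarith
  have hza : h a = 0 := by simp only [hh]; linarith
  have hmin : IsLocalMin h a := by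
    apply Filter.Eventually.of_forall
    intro w; rw [hza]; exact hnn w
  have hFf := (hgrad a).hasFDerivAt
  have hFl : HasFDerivAt (fun w : En n => f b + ⟪f' b, w - b⟫)
      (innerSL ℝ (f' b)) a := by
    have h2 : HasFDerivAt (fun w : En n => ⟪f' b, w⟫) (innerSL ℝ (f' b)) a :=
      (innerSL ℝ (f' b)).hasFDerivAt
    have h3 : HasFDerivAt (fun w : En n => f b + (⟪f' b, w⟫ - ⟪f' b, b⟫))
        (innerSL ℝ (f' b)) a := (h2.sub_const ⟪f' b, b⟫).const_add (f b)
    simp only [← inner_sub_right] at h3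
    exact h3
  have hFh : HasFDerivAt h ((InnerProductSpace.toDual ℝ (En n)) (f' a) - innerSL ℝ (f' b)) a :=
    hFf.sub hFl
  have hzero := hmin.hasFDerivAt_eq_zero hFh
  have hall : ∀ v : En n, ⟪f' a, v⟫ - ⟪f' b, v⟫ = 0 := by
    intro v
    have := congrFun (congrArg DFunLike.coe hzero) v
    simpa [InnerProductSpace.toDual_apply_apply] using this
  have hv := hall (f' a - f' b)
  rw [← inner_sub_left] at hv
  have hfin : f' a - f' b = 0 := by rwa [inner_self_eq_zero] at hv
  exact sub_eq_zero.1 hfin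

lemma prox_out_ne_top {n : ℕ} {γ : ℝ} {g : En n → EReal}
    (hg : ProperLscConvex g) {u p : En n} (hp : IsProx γ g u p) : g p ≠ ⊤ := by
  obtain ⟨w, hw⟩ := hg.2.1
  intro htop
  have h := hp w
  rw [htop] at h
  have hb : ((‖p - u‖ ^ 2 / (2 * γ) : ℝ) : EReal) ≠ ⊥ := EReal.coe_ne_bot _
  rw [EReal.top_add_of_ne_bot hb] at h
  have h2 : g w + ((‖w - u‖ ^ 2 / (2 * γ) : ℝ) : EReal) ≠ ⊤ :=
    (EReal.add_lt_top hw (EReal.coe_ne_top _)).ne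
  exact h2 (top_le_iff.mp h)

lemma prox_subgrad {n : ℕ} {γ : ℝ} (hγ : 0 < γ) {g : En n → EReal}
    (hg : ProperLscConvex g) {u p : En n} (hp : IsProx γ g u p)
    (w : En n) (hwt : g w ≠ ⊤) :
    γ * ((g p).toReal - (g w).toReal) ≤ ⟪p - u, w - p⟫ := by
  have hpt : g p ≠ ⊤ := prox_out_ne_top hg hp
  set gp : ℝ := (g p).toReal with hgp
  set gw : ℝ := (g w).toReal with hgw
  have hgpe : g p = (gp : EReal) := (EReal.coe_toReal hpt (hg.1 p)).symm
  have hgwe : g w = (gw : EReal) := (EReal.coe_toReal hwt (hg.1 w)).symm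
  set ip : ℝ := ⟪p - u, w - p⟫ with hip
  set q : ℝ := ‖w - p‖ ^ 2 with hq
  have key : ∀ t : ℝ, 0 < t → t ≤ 1 → gp ≤ gw + ip / γ + t * (q / (2 * γ)) := by
    intro t ht0 ht1
    have hwt' : p + t • (w - p) = (1 - t) • p + t • w := by module
    have hconv := hg.2.2.2 p w (1 - t) t (by linarith) ht0.le (by ring)
    have hprox := hp (p + t • (w - p))
    rw [hwt'] at hprox
    have hchain : (gp : EReal) + ((‖p - u‖ ^ 2 / (2 * γ) : ℝ) : EReal) ≤
        (((1 - t) * gp + t * gw : ℝ) : EReal)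
          + ((‖(1 - t) • p + t • w - u‖ ^ 2 / (2 * γ) : ℝ) : EReal) := by
      rw [← hgpe]
      refine le_trans hprox (add_le_add ?_ le_rfl)
      rw [hgpe, hgwe] at hconv
      rw [EReal.coe_add, EReal.coe_mul, EReal.coe_mul]
      exact hconv
    rw [← EReal.coe_add, ← EReal.coe_add, EReal.coe_le_coe_iff] at hchain
    have hnorm : ‖(1 - t) • p + t • w - u‖ ^ 2
        = ‖p - u‖ ^ 2 + 2 * t * ip + t ^ 2 * q := by
      have hv : (1 - t) • p + t • w - u = (p - u) + t • (w - p) := by module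
      rw [hv, norm_add_sq_real, real_inner_smul_right, norm_smul]
      simp [hip, hq, abs_of_pos ht0]
      ring
    rw [hnorm] at hchain
    have h2γ : 0 < 2 * γ := by linarith
    have hkey2 : t * gp ≤ t * (gw + ip / γ + t * (q / (2 * γ))) := by
      have expand : (‖p - u‖ ^ 2 + 2 * t * ip + t ^ 2 * q) / (2 * γ)
          = ‖p - u‖ ^ 2 / (2 * γ) + t * ip / γ + t ^ 2 * q / (2 * γ) := by
        field_simp
      rw [expand] at hchain
      have hlin : t * gp ≤ t * gw + t * ip / γ + t ^ 2 * q / (2 * γ) := by linarith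
      calc t * gp ≤ t * gw + t * ip / γ + t ^ 2 * q / (2 * γ) := hlin
        _ = t * (gw + ip / γ + t * (q / (2 * γ))) := by field_simp
    exact le_of_mul_le_mul_left hkey2 ht0
  have hmain : gp - gw ≤ ip / γ := by
    have hq0 : 0 ≤ q / (2 * γ) := by positivity
    refine sub_le_iff_le_add.mpr ?_
    rw [add_comm]
    refine le_of_forall_pos_le_add ?_
    intro δ hδ
    set t : ℝ := min 1 (δ / (q / (2 * γ) + 1)) with htdef
    have ht0 : 0 < t := lt_min zero_lt_one (by positivity)
    have ht1 : t ≤ 1 := min_le_left _ _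
    have hkt := key t ht0 ht1
    have hlast : t * (q / (2 * γ)) ≤ δ := by
      have h1 : t ≤ δ / (q / (2 * γ) + 1) := min_le_right _ _
      have h2 : t * (q / (2 * γ)) ≤ (δ / (q / (2 * γ) + 1)) * (q / (2 * γ)) :=
        mul_le_mul_of_nonneg_right h1 hq0
      have h3 : (δ / (q / (2 * γ) + 1)) * (q / (2 * γ)) ≤ δ := by
        rw [div_mul_eq_mul_div, div_le_iff₀ (by positivity)]
        nlinarith
      linarith
    linarith
  have hfin := mul_le_mul_of_nonneg_left hmain hγ.le
  calc γ * (gp - gw) ≤ γ * (ip / γ) := hfin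
    _ = ip := by field_simp

lemma esubgrad_ne_top {n : ℕ} {ψ : En n → EReal} {v x : En n}
    (h : ESubgrad ψ v x) {w : En n} (hw : ψ w ≠ ⊤) : ψ x ≠ ⊤ := by
  intro htop
  have h2 := h w
  rw [htop, EReal.top_add_of_ne_bot (EReal.coe_ne_bot _)] at h2
  exact hw (top_le_iff.mp h2)

lemma Pw_eq_coe {n m : ℕ} (f : En n → ℝ) (g : En n → EReal)
    (A : En n →L[ℝ] En m) (xs : En n) (ys : En m) (z : En n)
    (hzt : g z ≠ ⊤) (hzb : g z ≠ ⊥) (hst : g xs ≠ ⊤) (hsb : g xs ≠ ⊥) :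
    Pw f g A xs ys z = ((PpdR f g A xs ys z : ℝ) : EReal) := by
  unfold Pw PpdR
  rw [← EReal.coe_toReal hzt hzb, ← EReal.coe_toReal hst hsb]
  norm_cast

lemma Qw_eq_coe {n m : ℕ} (hs : En m → EReal)
    (A : En n →L[ℝ] En m) (xs : En n) (ys : En m) (u : En m)
    (hut : hs u ≠ ⊤) (hub : hs u ≠ ⊥) (hyt : hs ys ≠ ⊤) (hyb : hs ys ≠ ⊥) :
    Qw hs A xs ys u = ((QpdR hs A xs ys u : ℝ) : EReal) := by
  unfold Qw QpdR
  rw [← EReal.coe_toReal hut hub, ← EReal.coe_toReal hyt hyb]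
  norm_cast

lemma Pw_eq_top {n m : ℕ} (f : En n → ℝ) (g : En n → EReal)
    (A : En n →L[ℝ] En m) (xs : En n) (ys : En m) (z : En n)
    (hzt : g z = ⊤) (hst : g xs ≠ ⊤) (hsb : g xs ≠ ⊥) :
    Pw f g A xs ys z = ⊤ := by
  unfold Pw
  rw [hzt, ← EReal.coe_toReal hst hsb, EReal.coe_add_top, ← EReal.coe_add,
    EReal.top_sub_coe, EReal.top_add_of_ne_bot (EReal.coe_ne_bot _)]

lemma young_ineq (c κ : ℝ) (hc : 0 ≤ c) (hκ : 0 < κ) (a b : ℝ) :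
    c * (a * b) ≤ c * κ / 2 * a ^ 2 + c / (2 * κ) * b ^ 2 := by
  have key : a * b ≤ κ / 2 * a ^ 2 + 1 / (2 * κ) * b ^ 2 := by
    have h := sq_nonneg (κ * a - b)
    rw [← sub_nonneg]
    have e : κ / 2 * a ^ 2 + 1 / (2 * κ) * b ^ 2 - a * b = (κ * a - b) ^ 2 / (2 * κ) := by
      field_simp
      ring
    rw [e]
    positivity
  calc c * (a * b) ≤ c * (κ / 2 * a ^ 2 + 1 / (2 * κ) * b ^ 2) :=
        mul_le_mul_of_nonneg_left key hc
    _ = c * κ / 2 * a ^ 2 + c / (2 * κ) * b ^ 2 := by ring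

end AuxLemmas

set_option maxHeartbeats 1600000

/-- fundamental inequality for the primal-dual iterations
(Lemma "thm:PD:descent"). Indexing is shifted by one: Lean `x (k+1)`, `y (k+1)`,
`γ (k+1)`, `σ (k+1)` are the paper `x^k`, `y^k`, `γ_k`, `σ_k` (so `x 0 = x^{-1}`,
`x 1 = x⁰`, `y 1 = y⁰`). -/
theorem PD_fundamental_inequality {n m : ℕ}
    (f : En n → ℝ) (f' : En n → En n) (g : En n → EReal) (hs : En m → EReal)
    (A : En n →L[ℝ] En m)
    (hconv : ConvexOn ℝ Set.univ f)
    (hgrad : ∀ z, HasGradientAt f (f' z) z)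
    (hlip : LocallyLipschitz f')
    (hg : ProperLscConvex g) (hhs : ProperLscConvex hs)
    (γ σ : ℕ → ℝ) (hγpos : ∀ k, 0 < γ k) (hσpos : ∀ k, 0 < σ k)
    (x : ℕ → En n) (y : ℕ → En m)
    (hyup : ∀ k : ℕ, IsProx (σ (k+2)) hs
      (y (k+1) + σ (k+2) • ((1 + γ (k+2) / γ (k+1)) • A (x (k+1))
        - (γ (k+2) / γ (k+1)) • A (x k))) (y (k+2)))
    (hxup : ∀ k : ℕ, IsProx (γ (k+2)) g
      (x (k+1) - γ (k+2) • f' (x (k+1))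
        - γ (k+2) • ContinuousLinearMap.adjoint A (y (k+2))) (x (k+2)))
    (xs : En n) (ys : En m) (hsol : IsPDSol f' g hs A xs ys)
    (k : ℕ) (hk : 1 ≤ k)
    (ε τ μ η : ℝ) (hε : 0 < ε) (hτ : 0 < τ) (hμ : 0 < μ)
    (hη : ‖ContinuousLinearMap.adjoint A (y (k+2) - y (k+1))‖ / ‖y (k+2) - y (k+1)‖ ≤ η) :
    (0 : EReal) ≤
      ((1/2 * ‖x (k+1) - xs‖ ^ 2 - 1/2 * ‖x (k+2) - xs‖ ^ 2
        + (ε * (γ (k+2) / γ (k+1)) + μ * η * γ (k+2) - 1) / 2 * ‖x (k+1) - x (k+2)‖ ^ 2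
        + (γ (k+2) / γ (k+1))
          * ((1 - γ (k+1) * lEst f' (x k) (x (k+1))
                * (2 - γ (k+1) * cEst f' (x k) (x (k+1)))) / (2 * ε)
             + τ * η * γ (k+2) / 2
             - (γ (k+2) / γ (k+1)) * (1 - γ (k+1) * lEst f' (x k) (x (k+1))))
          * ‖x k - x (k+1)‖ ^ 2
        + γ (k+2) / (2 * σ (k+2)) * ‖y (k+1) - ys‖ ^ 2
        - (γ (k+2) / (2 * σ (k+2)) - η * γ (k+2) / 2 * (1 / μ + (γ (k+2) / γ (k+1)) / τ))
            * ‖y (k+2) - y (k+1)‖ ^ 2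
        - γ (k+2) / (2 * σ (k+2)) * ‖y (k+2) - ys‖ ^ 2 : ℝ) : EReal)
      + ((γ (k+2) * (γ (k+2) / γ (k+1)) : ℝ) : EReal) * Pw f g A xs ys (x k)
      - ((γ (k+2) * (1 + γ (k+2) / γ (k+1)) : ℝ) : EReal) * Pw f g A xs ys (x (k+1))
      - ((γ (k+2) : ℝ) : EReal) * Qw hs A xs ys (y (k+2)) := by
  obtain ⟨j, rfl⟩ : ∃ j, k = j + 1 := ⟨k - 1, by omega⟩
  simp only [show j + 1 + 1 = j + 2 from by omega,
    show j + 1 + 2 = j + 3 from by omega] at hη ⊢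
  have hx1 := hxup j
  have hx2 := hxup (j + 1)
  have hy2 := hyup (j + 1)
  simp only [show j + 1 + 1 = j + 2 from by omega,
    show j + 1 + 2 = j + 3 from by omega] at hx2 hy2
  have hγ0 : 0 < γ (j + 2) := hγpos _
  have hγ1 : 0 < γ (j + 3) := hγpos _
  have hσ1 : 0 < σ (j + 3) := hσpos _
  obtain ⟨wg, hwg⟩ := hg.2.1
  obtain ⟨wh, hwh⟩ := hhs.2.1
  have hgxs_t : g xs ≠ ⊤ := esubgrad_ne_top hsol.2 hwg
  have hhsys_t : hs ys ≠ ⊤ := esubgrad_ne_top hsol.1 hwh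
  have hgXo_t : g (x (j + 2)) ≠ ⊤ := prox_out_ne_top hg hx1
  have hgXp_t : g (x (j + 3)) ≠ ⊤ := prox_out_ne_top hg hx2
  have hhsYp_t : hs (y (j + 3)) ≠ ⊤ := prox_out_ne_top hhs hy2
  by_cases hgXm_t : g (x (j + 1)) = ⊤
  · rw [Pw_eq_top f g A xs ys (x (j + 1)) hgXm_t hgxs_t (hg.1 xs),
      Pw_eq_coe f g A xs ys (x (j + 2)) hgXo_t (hg.1 _) hgxs_t (hg.1 xs),
      Qw_eq_coe hs A xs ys (y (j + 3)) hhsYp_t (hhs.1 _) hhsys_t (hhs.1 ys),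
      EReal.coe_mul_top_of_pos (mul_pos hγ1 (div_pos hγ1 hγ0)), EReal.coe_add_top,
      ← EReal.coe_mul, ← EReal.coe_mul, EReal.top_sub_coe, EReal.top_sub_coe]
    exact le_top
  · rw [Pw_eq_coe f g A xs ys (x (j + 1)) hgXm_t (hg.1 _) hgxs_t (hg.1 xs),
      Pw_eq_coe f g A xs ys (x (j + 2)) hgXo_t (hg.1 _) hgxs_t (hg.1 xs),
      Qw_eq_coe hs A xs ys (y (j + 3)) hhsYp_t (hhs.1 _) hhsys_t (hhs.1 ys),
      ← EReal.coe_mul, ← EReal.coe_mul, ← EReal.coe_mul,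
      ← EReal.coe_add, ← EReal.coe_sub, ← EReal.coe_sub, ← EReal.coe_zero,
      EReal.coe_le_coe_iff]
    simp only [PpdR, QpdR]
    set Xm := x (j + 1) with hXmdef
    set Xo := x (j + 2) with hXodef
    set Xp := x (j + 3) with hXpdef
    set Yo := y (j + 2) with hYodef
    set Yp := y (j + 3) with hYpdef
    set Gm := f' Xm with hGmdef
    set Go := f' Xo with hGodef
    set At := ContinuousLinearMap.adjoint A with hAt
    set ρ := γ (j + 3) / γ (j + 2) with hρdef
    have hρ : 0 < ρ := div_pos hγ1 hγ0
    have hγ3 : γ (j + 3) = ρ * γ (j + 2) := by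
      rw [hρdef]; field_simp
    rw [hγ3] at hx2 ⊢
    have hγ1' : 0 < ρ * γ (j + 2) := mul_pos hρ hγ0
    have hη0 : 0 ≤ η := le_trans (div_nonneg (norm_nonneg _) (norm_nonneg _)) hη
    have hAyd : ‖At (Yp - Yo)‖ ≤ η * ‖Yp - Yo‖ := by
      by_cases hz : Yp - Yo = 0
      · simp [hz]
      · have hn : 0 < ‖Yp - Yo‖ := norm_pos_iff.mpr hz
        rw [div_le_iff₀ hn] at hη
        linarith [hη]
    -- prox-based inequalities
    have H1 := prox_subgrad hγ1' hg hx2 xs hgxs_t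
    have H2raw := prox_subgrad hγ0 hg hx1 Xp hgXp_t
    have H3raw := prox_subgrad hγ0 hg hx1 Xm hgXm_t
    have H4raw := prox_subgrad hσ1 hhs hy2 ys hhsys_t
    have H2 := mul_le_mul_of_nonneg_left H2raw hρ.le
    have H3 := mul_le_mul_of_nonneg_left H3raw (mul_nonneg hρ.le hρ.le)
    have H5 := mul_le_mul_of_nonneg_left (convex_grad_ineq hconv hgrad Xo xs) hγ1'.le
    have H6 := mul_le_mul_of_nonneg_left (convex_grad_ineq hconv hgrad Xo Xm)
      (mul_nonneg (mul_nonneg hρ.le hρ.le) hγ0.le)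
    -- clean form of the dual prox inequality
    have e4 : ⟪Yp - (Yo + σ (j + 3) • ((1 + ρ) • A Xo - ρ • A Xm)), ys - Yp⟫
        = ⟪Yp - Yo, ys - Yp⟫
          + σ (j + 3) * ((1 + ρ) * ⟪A Xo, Yp - ys⟫ - ρ * ⟪A Xm, Yp - ys⟫) := by
      simp only [inner_sub_left, inner_add_left, inner_sub_right, real_inner_smul_left]
      ring
    rw [e4] at H4raw
    have H4 : (ρ * γ (j + 2)) * ((hs Yp).toReal - (hs ys).toReal)
        ≤ (ρ * γ (j + 2) / σ (j + 3)) * ⟪Yp - Yo, ys - Yp⟫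
          + (ρ * γ (j + 2)) * ((1 + ρ) * ⟪A Xo, Yp - ys⟫ - ρ * ⟪A Xm, Yp - ys⟫) := by
      have h2 := mul_le_mul_of_nonneg_left H4raw (div_nonneg hγ1'.le hσ1.le)
      have c1 : (ρ * γ (j + 2) / σ (j + 3)) * (σ (j + 3) * ((hs Yp).toReal - (hs ys).toReal))
          = (ρ * γ (j + 2)) * ((hs Yp).toReal - (hs ys).toReal) := by
        field_simp
      have c2 : (ρ * γ (j + 2) / σ (j + 3)) * (⟪Yp - Yo, ys - Yp⟫
            + σ (j + 3) * ((1 + ρ) * ⟪A Xo, Yp - ys⟫ - ρ * ⟪A Xm, Yp - ys⟫))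
          = (ρ * γ (j + 2) / σ (j + 3)) * ⟪Yp - Yo, ys - Yp⟫
            + (ρ * γ (j + 2)) * ((1 + ρ) * ⟪A Xo, Yp - ys⟫ - ρ * ⟪A Xm, Yp - ys⟫) := by
        field_simp
      rw [c1, c2] at h2
      exact h2
    -- local curvature identities
    have FI : lEst f' Xm Xo * ‖Xm - Xo‖ ^ 2 = ⟪Gm - Go, Xm - Xo⟫ := by
      rw [hGmdef, hGodef]
      simp only [lEst]
      by_cases hxx : Xm = Xo
      · simp [hxx]
      · exact div_mul_cancel₀ _ (pow_ne_zero _ (norm_ne_zero_iff.mpr (sub_ne_zero.mpr hxx)))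
    have FN : ‖Gm - Go‖ ^ 2 = lEst f' Xm Xo * cEst f' Xm Xo * ‖Xm - Xo‖ ^ 2 := by
      rw [hGmdef, hGodef]
      simp only [lEst, cEst]
      by_cases hxx : Xm = Xo
      · simp [hxx]
      · by_cases hI : ⟪f' Xm - f' Xo, Xm - Xo⟫ = 0
        · have hGd : f' Xm = f' Xo := grad_eq_of_inner_eq_zero hconv hgrad hI
          simp [hI, hGd]
        · have hΔ2 : ‖Xm - Xo‖ ^ 2 ≠ 0 :=
            pow_ne_zero _ (norm_ne_zero_iff.mpr (sub_ne_zero.mpr hxx))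
          rw [div_mul_div_comm, div_mul_eq_mul_div, eq_div_iff (mul_ne_zero hΔ2 hI)]
          ring
    have hbase : ‖(Xm - Xo) - γ (j + 2) • (Gm - Go)‖ ^ 2
        = (1 - γ (j + 2) * lEst f' Xm Xo * (2 - γ (j + 2) * cEst f' Xm Xo))
            * ‖Xm - Xo‖ ^ 2 := by
      have hcm : ⟪Xm - Xo, Gm - Go⟫ = ⟪Gm - Go, Xm - Xo⟫ := real_inner_comm _ _
      rw [norm_sub_sq_real, real_inner_smul_right, norm_smul, Real.norm_eq_abs, mul_pow, sq_abs]
      linear_combination (-2 * γ (j + 2)) * hcm + (2 * γ (j + 2)) * FI + γ (j + 2) ^ 2 * FN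
    have hv2 : ‖ρ • (Xm - Xo) - (ρ * γ (j + 2)) • (Gm - Go)‖ ^ 2
        = ρ ^ 2 * ((1 - γ (j + 2) * lEst f' Xm Xo * (2 - γ (j + 2) * cEst f' Xm Xo))
            * ‖Xm - Xo‖ ^ 2) := by
      have hsm : ρ • (Xm - Xo) - (ρ * γ (j + 2)) • (Gm - Go)
          = ρ • ((Xm - Xo) - γ (j + 2) • (Gm - Go)) := by module
      rw [hsm, norm_smul, Real.norm_eq_abs, mul_pow, sq_abs, hbase]
    have Y3 : ⟪ρ • (Xm - Xo) - (ρ * γ (j + 2)) • (Gm - Go), Xo - Xp⟫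
        ≤ ρ * ((1 - γ (j + 2) * lEst f' Xm Xo * (2 - γ (j + 2) * cEst f' Xm Xo)) / (2 * ε))
            * ‖Xm - Xo‖ ^ 2 + ε * ρ / 2 * ‖Xo - Xp‖ ^ 2 := by
      have s1 := real_inner_le_norm (ρ • (Xm - Xo) - (ρ * γ (j + 2)) • (Gm - Go)) (Xo - Xp)
      have y := young_ineq 1 (ε * ρ) zero_le_one (mul_pos hε hρ) ‖Xo - Xp‖
        ‖ρ • (Xm - Xo) - (ρ * γ (j + 2)) • (Gm - Go)‖
      have e5 : 1 / (2 * (ε * ρ)) * ‖ρ • (Xm - Xo) - (ρ * γ (j + 2)) • (Gm - Go)‖ ^ 2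
          = ρ * ((1 - γ (j + 2) * lEst f' Xm Xo * (2 - γ (j + 2) * cEst f' Xm Xo)) / (2 * ε))
              * ‖Xm - Xo‖ ^ 2 := by
        rw [hv2]; field_simp
      linarith [s1, y, e5]
    have Y1 : (ρ * γ (j + 2)) * ⟪Yp - Yo, A Xo - A Xp⟫
        ≤ (η * (ρ * γ (j + 2))) * μ / 2 * ‖Xo - Xp‖ ^ 2
          + (η * (ρ * γ (j + 2))) / (2 * μ) * ‖Yp - Yo‖ ^ 2 := by
      have heq : ⟪Yp - Yo, A Xo - A Xp⟫ = ⟪At (Yp - Yo), Xo - Xp⟫ := by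
        rw [hAt, ContinuousLinearMap.adjoint_inner_left, map_sub]
      have s1 := real_inner_le_norm (At (Yp - Yo)) (Xo - Xp)
      have s2 : ‖At (Yp - Yo)‖ * ‖Xo - Xp‖ ≤ (η * ‖Yp - Yo‖) * ‖Xo - Xp‖ :=
        mul_le_mul_of_nonneg_right hAyd (norm_nonneg _)
      have y := young_ineq (η * (ρ * γ (j + 2))) μ (mul_nonneg hη0 hγ1'.le) hμ
        ‖Xo - Xp‖ ‖Yp - Yo‖
      have hs3 : ⟪Yp - Yo, A Xo - A Xp⟫ ≤ η * (‖Xo - Xp‖ * ‖Yp - Yo‖) := by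
        rw [heq]; linarith [s1, s2]
      have hs4 := mul_le_mul_of_nonneg_left hs3 hγ1'.le
      linarith [hs4, y]
    have Y2 : (ρ * (ρ * γ (j + 2))) * ⟪Yp - Yo, A Xo - A Xm⟫
        ≤ (η * (ρ * (ρ * γ (j + 2)))) * τ / 2 * ‖Xm - Xo‖ ^ 2
          + (η * (ρ * (ρ * γ (j + 2)))) / (2 * τ) * ‖Yp - Yo‖ ^ 2 := by
      have heq : ⟪Yp - Yo, A Xo - A Xm⟫ = ⟪At (Yp - Yo), Xo - Xm⟫ := by
        rw [hAt, ContinuousLinearMap.adjoint_inner_left, map_sub]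
      have s1 := real_inner_le_norm (At (Yp - Yo)) (Xo - Xm)
      have s2 : ‖At (Yp - Yo)‖ * ‖Xo - Xm‖ ≤ (η * ‖Yp - Yo‖) * ‖Xo - Xm‖ :=
        mul_le_mul_of_nonneg_right hAyd (norm_nonneg _)
      have hrev : ‖Xo - Xm‖ = ‖Xm - Xo‖ := norm_sub_rev _ _
      have y := young_ineq (η * (ρ * (ρ * γ (j + 2)))) τ
        (mul_nonneg hη0 (mul_nonneg hρ.le hγ1'.le)) hτ ‖Xm - Xo‖ ‖Yp - Yo‖
      have hs3 : ⟪Yp - Yo, A Xo - A Xm⟫ ≤ η * (‖Xm - Xo‖ * ‖Yp - Yo‖) := by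
        rw [heq]; rw [hrev] at s1 s2; linarith [s1, s2]
      have hs4 := mul_le_mul_of_nonneg_left hs3 (mul_nonneg hρ.le hγ1'.le)
      linarith [hs4, y]
    rw [← hGodef] at H5 H6
    have corr : ρ ^ 2 * γ (j + 2) * (lEst f' Xm Xo * ‖Xm - Xo‖ ^ 2)
        = ρ ^ 2 * γ (j + 2) * ⟪Gm - Go, Xm - Xo⟫ := by rw [FI]
    have hD1 : (0:ℝ) ≤ ⟪Xp - (Xo - (ρ * γ (j + 2)) • Go - (ρ * γ (j + 2)) • At Yp), xs - Xp⟫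
        - ρ * γ (j + 2) * ((g Xp).toReal - (g xs).toReal) := sub_nonneg.mpr H1
    have hD2 : (0:ℝ) ≤ ρ * ⟪Xo - (Xm - γ (j + 2) • Gm - γ (j + 2) • At Yo), Xp - Xo⟫
        - ρ * (γ (j + 2) * ((g Xo).toReal - (g Xp).toReal)) := sub_nonneg.mpr H2
    have hD3 : (0:ℝ) ≤ ρ * ρ * ⟪Xo - (Xm - γ (j + 2) • Gm - γ (j + 2) • At Yo), Xm - Xo⟫
        - ρ * ρ * (γ (j + 2) * ((g Xo).toReal - (g Xm).toReal)) := sub_nonneg.mpr H3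
    have hD4 : (0:ℝ) ≤ ρ * γ (j + 2) / σ (j + 3) * ⟪Yp - Yo, ys - Yp⟫
        + ρ * γ (j + 2) * ((1 + ρ) * ⟪A Xo, Yp - ys⟫ - ρ * ⟪A Xm, Yp - ys⟫)
        - ρ * γ (j + 2) * ((hs Yp).toReal - (hs ys).toReal) := sub_nonneg.mpr H4
    have hD5 : (0:ℝ) ≤ ρ * γ (j + 2) * f xs
        - ρ * γ (j + 2) * (f Xo + ⟪Go, xs - Xo⟫) := sub_nonneg.mpr H5
    have hD6 : (0:ℝ) ≤ ρ * ρ * γ (j + 2) * f Xm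
        - ρ * ρ * γ (j + 2) * (f Xo + ⟪Go, Xm - Xo⟫) := sub_nonneg.mpr H6
    have hD7 : (0:ℝ) ≤ η * (ρ * γ (j + 2)) * μ / 2 * ‖Xo - Xp‖ ^ 2
        + η * (ρ * γ (j + 2)) / (2 * μ) * ‖Yp - Yo‖ ^ 2
        - ρ * γ (j + 2) * ⟪Yp - Yo, A Xo - A Xp⟫ := sub_nonneg.mpr Y1
    have hD8 : (0:ℝ) ≤ η * (ρ * (ρ * γ (j + 2))) * τ / 2 * ‖Xm - Xo‖ ^ 2
        + η * (ρ * (ρ * γ (j + 2))) / (2 * τ) * ‖Yp - Yo‖ ^ 2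
        - ρ * (ρ * γ (j + 2)) * ⟪Yp - Yo, A Xo - A Xm⟫ := sub_nonneg.mpr Y2
    have hD9 : (0:ℝ) ≤ ρ * ((1 - γ (j + 2) * lEst f' Xm Xo * (2 - γ (j + 2) * cEst f' Xm Xo)) / (2 * ε))
          * ‖Xm - Xo‖ ^ 2 + ε * ρ / 2 * ‖Xo - Xp‖ ^ 2
        - ⟪ρ • (Xm - Xo) - (ρ * γ (j + 2)) • (Gm - Go), Xo - Xp⟫ := sub_nonneg.mpr Y3
    have hc0 : ρ ^ 2 * γ (j + 2) * (lEst f' Xm Xo * ‖Xm - Xo‖ ^ 2)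
        - ρ ^ 2 * γ (j + 2) * ⟪Gm - Go, Xm - Xo⟫ = 0 := by rw [corr]; ring
    refine le_of_le_of_eq (b :=
      (⟪Xp - (Xo - (ρ * γ (j + 2)) • Go - (ρ * γ (j + 2)) • At Yp), xs - Xp⟫
        - ρ * γ (j + 2) * ((g Xp).toReal - (g xs).toReal))
      + (ρ * ⟪Xo - (Xm - γ (j + 2) • Gm - γ (j + 2) • At Yo), Xp - Xo⟫
        - ρ * (γ (j + 2) * ((g Xo).toReal - (g Xp).toReal)))
      + (ρ * ρ * ⟪Xo - (Xm - γ (j + 2) • Gm - γ (j + 2) • At Yo), Xm - Xo⟫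
        - ρ * ρ * (γ (j + 2) * ((g Xo).toReal - (g Xm).toReal)))
      + (ρ * γ (j + 2) / σ (j + 3) * ⟪Yp - Yo, ys - Yp⟫
        + ρ * γ (j + 2) * ((1 + ρ) * ⟪A Xo, Yp - ys⟫ - ρ * ⟪A Xm, Yp - ys⟫)
        - ρ * γ (j + 2) * ((hs Yp).toReal - (hs ys).toReal))
      + (ρ * γ (j + 2) * f xs - ρ * γ (j + 2) * (f Xo + ⟪Go, xs - Xo⟫))
      + (ρ * ρ * γ (j + 2) * f Xm - ρ * ρ * γ (j + 2) * (f Xo + ⟪Go, Xm - Xo⟫))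
      + (η * (ρ * γ (j + 2)) * μ / 2 * ‖Xo - Xp‖ ^ 2
        + η * (ρ * γ (j + 2)) / (2 * μ) * ‖Yp - Yo‖ ^ 2
        - ρ * γ (j + 2) * ⟪Yp - Yo, A Xo - A Xp⟫)
      + (η * (ρ * (ρ * γ (j + 2))) * τ / 2 * ‖Xm - Xo‖ ^ 2
        + η * (ρ * (ρ * γ (j + 2))) / (2 * τ) * ‖Yp - Yo‖ ^ 2
        - ρ * (ρ * γ (j + 2)) * ⟪Yp - Yo, A Xo - A Xm⟫)
      + (ρ * ((1 - γ (j + 2) * lEst f' Xm Xo * (2 - γ (j + 2) * cEst f' Xm Xo)) / (2 * ε))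
          * ‖Xm - Xo‖ ^ 2 + ε * ρ / 2 * ‖Xo - Xp‖ ^ 2
        - ⟪ρ • (Xm - Xo) - (ρ * γ (j + 2)) • (Gm - Go), Xo - Xp⟫)
      + (ρ ^ 2 * γ (j + 2) * (lEst f' Xm Xo * ‖Xm - Xo‖ ^ 2)
        - ρ ^ 2 * γ (j + 2) * ⟪Gm - Go, Xm - Xo⟫)) ?_ ?_
    · rw [hc0, add_zero]
      exact add_nonneg (add_nonneg (add_nonneg (add_nonneg (add_nonneg (add_nonneg
        (add_nonneg (add_nonneg hD1 hD2) hD3) hD4) hD5) hD6) hD7) hD8) hD9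
    · simp only [hAt, inner_sub_left, inner_sub_right, inner_add_left, inner_add_right,
        real_inner_smul_left, real_inner_smul_right, map_sub, map_add, map_smul,
        ContinuousLinearMap.adjoint_inner_left, ContinuousLinearMap.adjoint_inner_right,
        norm_sub_sq_real, real_inner_self_eq_norm_sq,
        real_inner_comm Xo Xm, real_inner_comm Yp Yo,
        real_inner_comm Yp (A Xm), real_inner_comm Yp (A Xo), real_inner_comm Yp (A Xp),
        real_inner_comm Yp (A xs), real_inner_comm Yo (A Xm), real_inner_comm Yo (A Xo),
        real_inner_comm Yo (A Xp), real_inner_comm Yo (A xs), real_inner_comm ys (A Xm),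
        real_inner_comm ys (A Xo), real_inner_comm ys (A Xp), real_inner_comm ys (A xs)]
      ring
end
end
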